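/- arXiv:1010.4522 — 3 statements merged into one kernel-verified Lean document; each statement's English description precedes it below -/
import Mathlib

section
/- (Goldstine–Weston in RN modules, (ε,λ) version) Let (E,‖·‖) be a random normed module over ℂ with base (Ω,𝓕,P) (no countable concatenation hypothesis). Then the image J(E) of E under the random natural embedding is dense in E** with respect to the (ε,λ) weak-star topology σ_{(ε,λ)}(E**,E*). -/
open MeasureTheory

noncomputable instance AEEqFun.instCommRing' {α γ : Type*} [MeasurableSpace α] {μ : Measure α}
    [TopologicalSpace γ] [CommRing γ] [IsTopologicalRing γ] : CommRing (α →ₘ[μ] γ) :=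
  { (inferInstance : AddCommGroup (α →ₘ[μ] γ)),
    (inferInstance : CommMonoid (α →ₘ[μ] γ)) with
    left_distrib := fun f g h => by
      apply AEEqFun.ext
      filter_upwards [AEEqFun.coeFn_mul f (g + h), AEEqFun.coeFn_add g h,
        AEEqFun.coeFn_mul f g, AEEqFun.coeFn_mul f h,
        AEEqFun.coeFn_add (f * g) (f * h)] with a h1 h2 h3 h4 h5
      simp only [Pi.mul_apply, Pi.add_apply] at *
      rw [h1, h2, h5, h3, h4, mul_add]
    right_distrib := fun f g h => by
      apply AEEqFun.ext
      filter_upwards [AEEqFun.coeFn_mul (f + g) h, AEEqFun.coeFn_add f g,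
        AEEqFun.coeFn_mul f h, AEEqFun.coeFn_mul g h,
        AEEqFun.coeFn_add (f * h) (g * h)] with a h1 h2 h3 h4 h5
      simp only [Pi.mul_apply, Pi.add_apply] at *
      rw [h1, h2, h5, h3, h4, add_mul]
    zero_mul := fun f => by
      apply AEEqFun.ext
      filter_upwards [AEEqFun.coeFn_mul 0 f, AEEqFun.coeFn_zero (α := α) (μ := μ) (β := γ)]
        with a h1 h2
      simp only [Pi.mul_apply] at *
      rw [h1, h2]
      simp
    mul_zero := fun f => by
      apply AEEqFun.ext
      filter_upwards [AEEqFun.coeFn_mul f 0, AEEqFun.coeFn_zero (α := α) (μ := μ) (β := γ)]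
        with a h1 h2
      simp only [Pi.mul_apply] at *
      rw [h1, h2]
      simp }

namespace RNM

variable {Ω : Type} [MeasurableSpace Ω] {P : Measure Ω}

/-- the pointwise absolute value `L⁰(𝓕,ℂ) → L⁰(𝓕,ℝ)`. -/
noncomputable def L0abs (ξ : Ω →ₘ[P] ℂ) : Ω →ₘ[P] ℝ :=
  ξ.comp (fun z => ‖z‖) continuous_norm

/-- the canonical embedding `L⁰(𝓕,ℝ) → L⁰(𝓕,ℂ)`. -/
noncomputable def ofRealC (ξ : Ω →ₘ[P] ℝ) : Ω →ₘ[P] ℂ :=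
  ξ.comp Complex.ofReal Complex.continuous_ofReal

/-- pointwise complex conjugation on `L⁰(𝓕,ℂ)`. -/
noncomputable def conjC (ξ : Ω →ₘ[P] ℂ) : Ω →ₘ[P] ℂ :=
  ξ.comp (fun z => starRingEnd ℂ z) Complex.continuous_conj

/-- `ξ ∈ L⁰₊₊`, i.e. `ξ > 0` a.e. on `Ω`. -/
def L0pos (ξ : Ω →ₘ[P] ℝ) : Prop := ∀ᵐ ω ∂P, 0 < ξ ω

/-- `ξ < η` (a.e.) on the whole of `Ω`. -/
def ltAE (ξ η : Ω →ₘ[P] ℝ) : Prop := ∀ᵐ ω ∂P, ξ ω < η ω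

/-- the equivalence class `Ĩ_A ∈ L⁰(𝓕,ℂ)` of the indicator of a measurable set `A`. -/
noncomputable def indC (A : Set Ω) (hA : MeasurableSet A) : Ω →ₘ[P] ℂ :=
  AEEqFun.mk (A.indicator fun _ => (1 : ℂ)) (aestronglyMeasurable_const.indicator hA)

/-- the equivalence class `Ĩ_A ∈ L⁰(𝓕,ℝ)` of the indicator of a measurable set `A`. -/
noncomputable def indR (A : Set Ω) (hA : MeasurableSet A) : Ω →ₘ[P] ℝ :=
  AEEqFun.mk (A.indicator fun _ => (1 : ℝ)) (aestronglyMeasurable_const.indicator hA)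

section AELemmas

lemma L0abs_ae (ξ : Ω →ₘ[P] ℂ) : ∀ᵐ ω ∂P, (L0abs ξ) ω = ‖ξ ω‖ :=
  AEEqFun.coeFn_comp _ _ ξ

lemma le_ae {ξ η : Ω →ₘ[P] ℝ} (h : ξ ≤ η) : ∀ᵐ ω ∂P, ξ ω ≤ η ω :=
  AEEqFun.coeFn_le.2 h

lemma le_of_ae {ξ η : Ω →ₘ[P] ℝ} (h : ∀ᵐ ω ∂P, ξ ω ≤ η ω) : ξ ≤ η :=
  AEEqFun.coeFn_le.1 h

lemma mul_ae {γ : Type*} [TopologicalSpace γ] [CommRing γ] [IsTopologicalRing γ]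
    (ξ η : Ω →ₘ[P] γ) : ∀ᵐ ω ∂P, (ξ * η) ω = ξ ω * η ω :=
  AEEqFun.coeFn_mul ξ η

lemma add_ae {γ : Type*} [TopologicalSpace γ] [AddGroup γ] [IsTopologicalAddGroup γ]
    (ξ η : Ω →ₘ[P] γ) : ∀ᵐ ω ∂P, (ξ + η) ω = ξ ω + η ω :=
  AEEqFun.coeFn_add ξ η

lemma sub_ae {γ : Type*} [TopologicalSpace γ] [AddGroup γ] [IsTopologicalAddGroup γ]
    (ξ η : Ω →ₘ[P] γ) : ∀ᵐ ω ∂P, (ξ - η) ω = ξ ω - η ω :=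
  AEEqFun.coeFn_sub ξ η

lemma zero_ae (γ : Type*) [TopologicalSpace γ] [Zero γ] :
    ∀ᵐ ω ∂P, (0 : Ω →ₘ[P] γ) ω = 0 :=
  AEEqFun.coeFn_zero

lemma one_ae (γ : Type*) [TopologicalSpace γ] [One γ] :
    ∀ᵐ ω ∂P, (1 : Ω →ₘ[P] γ) ω = 1 :=
  AEEqFun.coeFn_one

end AELemmas

/-- a countable measurable partition of `Ω`. -/
structure IsMPartition (A : ℕ → Set Ω) : Prop where
  meas : ∀ n, MeasurableSet (A n)
  disj : Pairwise (Function.onFun Disjoint A)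
  cover : (⋃ n, A n) = Set.univ

section Module

variable {E : Type*} [AddCommGroup E] [Module (Ω →ₘ[P] ℂ) E]

variable (P E) in
/-- `E` has the countable concatenation property. -/
def HasCCP : Prop :=
  ∀ (A : ℕ → Set Ω) (hA : IsMPartition A) (x : ℕ → E),
    ∃ x0 : E, ∀ n, indC (P := P) (A n) (hA.meas n) • x0 = indC (P := P) (A n) (hA.meas n) • x n

/-- a subset `S` of `E` has the countable concatenation property. -/
def SetCCP (S : Set E) : Prop :=
  ∀ (A : ℕ → Set Ω) (hA : IsMPartition A) (x : ℕ → E), (∀ n, x n ∈ S) →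
    ∃ x0 ∈ S, ∀ n, indC (P := P) (A n) (hA.meas n) • x0 = indC (P := P) (A n) (hA.meas n) • x n

/-- the countable concatenation hull `H_cc(S)` of a subset `S` of `E`. -/
def Hcc (S : Set E) : Set E :=
  {x | ∃ (A : ℕ → Set Ω) (hA : IsMPartition A) (m : ℕ → E), (∀ n, m n ∈ S) ∧
    ∀ n, indC (P := P) (A n) (hA.meas n) • x = indC (P := P) (A n) (hA.meas n) • m n}

/-- `L⁰`-convexity of a subset of an `L⁰(𝓕,ℂ)`-module. -/
def L0Convex (S : Set E) : Prop :=
  ∀ x ∈ S, ∀ y ∈ S, ∀ ξ : Ω →ₘ[P] ℝ, 0 ≤ ξ → ξ ≤ 1 →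
    ofRealC ξ • x + ofRealC (1 - ξ) • y ∈ S

/-- the random-norm axioms for `nrm : E → L⁰₊`, making `(E, nrm)` an `RN` module over `ℂ`. -/
structure IsRNNorm (nrm : E → (Ω →ₘ[P] ℝ)) : Prop where
  nonneg : ∀ x, 0 ≤ nrm x
  eq_zero_iff : ∀ x, nrm x = 0 ↔ x = 0
  smul_eq : ∀ (ξ : Ω →ₘ[P] ℂ) (x : E), nrm (ξ • x) = L0abs ξ * nrm x
  add_le : ∀ x y, nrm (x + y) ≤ nrm x + nrm y

/-- the submodule of `P`-a.e. bounded random linear functionals on `(E, nrm)`: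
the random conjugate space `E*`. -/
noncomputable def rdual (nrm : E → (Ω →ₘ[P] ℝ)) :
    Submodule (Ω →ₘ[P] ℂ) (E →ₗ[Ω →ₘ[P] ℂ] (Ω →ₘ[P] ℂ)) where
  carrier := {f | ∃ ξ : Ω →ₘ[P] ℝ, 0 ≤ ξ ∧ ∀ x, L0abs (f x) ≤ ξ * nrm x}
  zero_mem' := by
    refine ⟨0, le_refl 0, fun x => ?_⟩
    apply le_of_ae
    have e0 : ((0 : E →ₗ[Ω →ₘ[P] ℂ] (Ω →ₘ[P] ℂ)) x) = (0 : Ω →ₘ[P] ℂ) := rfl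
    filter_upwards [L0abs_ae ((0 : E →ₗ[Ω →ₘ[P] ℂ] (Ω →ₘ[P] ℂ)) x),
      mul_ae (0 : Ω →ₘ[P] ℝ) (nrm x), zero_ae ℝ, zero_ae ℂ] with ω h1 h2 h3 h4
    rw [h1, h2, h3, e0, h4]
    simp
  add_mem' := by
    rintro f g ⟨ξ, hξ0, hξ⟩ ⟨η, hη0, hη⟩
    have hsum : (0 : Ω →ₘ[P] ℝ) ≤ ξ + η := by
      apply le_of_ae
      filter_upwards [le_ae hξ0, le_ae hη0, add_ae ξ η, zero_ae ℝ] with ω h1 h2 h3 h4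
      rw [h3, h4]
      rw [h4] at h1 h2
      linarith
    refine ⟨ξ + η, hsum, fun x => ?_⟩
    apply le_of_ae
    have e1 : ((f + g) x) = f x + g x := rfl
    filter_upwards [L0abs_ae ((f + g) x), add_ae (f x) (g x),
      mul_ae (ξ + η) (nrm x), add_ae ξ η, mul_ae ξ (nrm x), mul_ae η (nrm x),
      le_ae (hξ x), le_ae (hη x), L0abs_ae (f x), L0abs_ae (g x)]
      with ω h1 h2 h3 h4 h5 h6 h7 h8 h9 h10
    rw [h1, h3, h4, e1, h2]
    rw [h9, h5] at h7
    rw [h10, h6] at h8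
    calc ‖f x ω + g x ω‖ ≤ ‖f x ω‖ + ‖g x ω‖ :=
          norm_add_le _ _
      _ ≤ ξ ω * nrm x ω + η ω * nrm x ω := add_le_add h7 h8
      _ = (ξ ω + η ω) * nrm x ω := by ring
  smul_mem' := by
    rintro c f ⟨ξ, hξ0, hξ⟩
    have hpos : (0 : Ω →ₘ[P] ℝ) ≤ L0abs c * ξ := by
      apply le_of_ae
      filter_upwards [mul_ae (L0abs c) ξ, L0abs_ae c, le_ae hξ0, zero_ae ℝ]
        with ω h1 h2 h3 h4
      rw [h1, h2, h4]
      rw [h4] at h3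
      positivity
    refine ⟨L0abs c * ξ, hpos, fun x => ?_⟩
    apply le_of_ae
    have e1 : ((c • f) x) = c * f x := rfl
    filter_upwards [L0abs_ae ((c • f) x), mul_ae c (f x),
      mul_ae (L0abs c * ξ) (nrm x), mul_ae (L0abs c) ξ, L0abs_ae c,
      le_ae (hξ x), L0abs_ae (f x), mul_ae ξ (nrm x)] with ω h1 h2 h3 h4 h5 h6 h7 h8
    rw [h1, h3, h4, h5, e1, h2]
    rw [h7, h8] at h6
    have h0 : (0:ℝ) ≤ ‖c ω‖ := norm_nonneg _
    calc ‖c ω * f x ω‖ = ‖c ω‖ * ‖f x ω‖ := norm_mul _ _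
      _ ≤ ‖c ω‖ * (ξ ω * nrm x ω) := mul_le_mul_of_nonneg_left h6 h0
      _ = ‖c ω‖ * ξ ω * nrm x ω := by ring

/-- the conjugate random norm `‖f‖* = ⋁{|f(y)| : ‖y‖ ≤ 1}` (the lattice supremum, when
it exists). -/
noncomputable def dnorm (nrm : E → (Ω →ₘ[P] ℝ))
    (f : E →ₗ[Ω →ₘ[P] ℂ] (Ω →ₘ[P] ℂ)) : Ω →ₘ[P] ℝ := by
  classical
  exact if h : ∃ s : Ω →ₘ[P] ℝ, IsLUB {a | ∃ y : E, nrm y ≤ 1 ∧ a = L0abs (f y)} s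
    then h.choose else 0

/-- the random natural embedding of `E` into functionals on its random conjugate space. -/
noncomputable def Jmap (nrm : E → (Ω →ₘ[P] ℝ)) (x : E) :
    (↥(rdual nrm)) →ₗ[Ω →ₘ[P] ℂ] (Ω →ₘ[P] ℂ) where
  toFun f := f.1 x
  map_add' f g := rfl
  map_smul' c f := rfl

end Module

section Topologies

/-- a topology built from a directed family of "balls". -/
def ballTop {X ι : Type*} [Nonempty ι] (ball : X → ι → Set X)
    (dir : ∀ x i j, ∃ k, ball x k ⊆ ball x i ∩ ball x j) : TopologicalSpace X where
  IsOpen B := ∀ x ∈ B, ∃ i, ball x i ⊆ B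
  isOpen_univ := fun x _ => ⟨Classical.arbitrary ι, fun _ _ => trivial⟩
  isOpen_inter := fun B C hB hC x hx => by
    obtain ⟨i, hi⟩ := hB x hx.1
    obtain ⟨j, hj⟩ := hC x hx.2
    obtain ⟨k, hk⟩ := dir x i j
    exact ⟨k, fun y hy => ⟨hi (hk hy).1, hj (hk hy).2⟩⟩
  isOpen_sUnion := fun S hS x hx => by
    obtain ⟨B, hB, hxB⟩ := hx
    obtain ⟨i, hi⟩ := hS B hB x hxB
    exact ⟨i, fun y hy => ⟨B, hB, hi hy⟩⟩

instance L0posNonempty : Nonempty {ε : Ω →ₘ[P] ℝ // L0pos ε} := by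
  refine ⟨⟨1, ?_⟩⟩
  filter_upwards [one_ae (P := P) ℝ] with ω h
  rw [h]; exact one_pos

instance : Nonempty {e : ℝ // 0 < e} := ⟨⟨1, one_pos⟩⟩

instance : Nonempty {l : ℝ // 0 < l ∧ l < 1} := ⟨⟨1/2, by norm_num⟩⟩

lemma L0pos_inf {ε δ : Ω →ₘ[P] ℝ} (hε : L0pos ε) (hδ : L0pos δ) : L0pos (ε ⊓ δ) := by
  filter_upwards [hε, hδ, AEEqFun.coeFn_inf ε δ] with ω h1 h2 h3
  rw [h3]; exact lt_inf_iff.2 ⟨h1, h2⟩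

lemma ltAE_inf {a ε δ : Ω →ₘ[P] ℝ} (h : ltAE a (ε ⊓ δ)) : ltAE a ε ∧ ltAE a δ := by
  constructor
  · filter_upwards [h, AEEqFun.coeFn_inf ε δ] with ω h1 h2
    rw [h2] at h1; exact h1.trans_le inf_le_left
  · filter_upwards [h, AEEqFun.coeFn_inf ε δ] with ω h1 h2
    rw [h2] at h1; exact h1.trans_le inf_le_right

variable {E : Type*} [AddCommGroup E] [Module (Ω →ₘ[P] ℂ) E]

/-- the locally `L⁰`-convex topology `𝓣_c` on an `RN` module `(E, nrm)`. -/
noncomputable def TcTop (nrm : E → (Ω →ₘ[P] ℝ)) : TopologicalSpace E :=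
  ballTop (ι := {ε : Ω →ₘ[P] ℝ // L0pos ε})
    (fun x ε => {y | ltAE (nrm (y - x)) ε.1})
    (by
      rintro x ⟨ε, hε⟩ ⟨δ, hδ⟩
      exact ⟨⟨ε ⊓ δ, L0pos_inf hε hδ⟩, fun y hy => ⟨(ltAE_inf hy).1, (ltAE_inf hy).2⟩⟩)

/-- the `(ε,λ)`-topology `𝓣_{ε,λ}` on an `RN` module `(E, nrm)`. -/
noncomputable def TelTop (nrm : E → (Ω →ₘ[P] ℝ)) : TopologicalSpace E :=
  ballTop (ι := {e : ℝ // 0 < e} × {l : ℝ // 0 < l ∧ l < 1})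
    (fun x i => {y | ENNReal.ofReal (1 - i.2.1) < P {ω | nrm (y - x) ω < i.1.1}})
    (by
      rintro x ⟨⟨e₁, he₁⟩, ⟨l₁, hl₁⟩⟩ ⟨⟨e₂, he₂⟩, ⟨l₂, hl₂⟩⟩
      refine ⟨⟨⟨min e₁ e₂, lt_min he₁ he₂⟩,
        ⟨min l₁ l₂, lt_min hl₁.1 hl₂.1, lt_of_le_of_lt (min_le_left _ _) hl₁.2⟩⟩,
        fun y hy => ⟨?_, ?_⟩⟩ <;> simp only [Set.mem_setOf_eq] at hy ⊢
      · refine lt_of_le_of_lt (ENNReal.ofReal_le_ofReal (by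
          have := min_le_left l₁ l₂; linarith)) (hy.trans_le (measure_mono fun ω hω =>
          show nrm (y - x) ω < e₁ from lt_of_lt_of_le hω (min_le_left _ _)))
      · refine lt_of_le_of_lt (ENNReal.ofReal_le_ofReal (by
          have := min_le_right l₁ l₂; linarith)) (hy.trans_le (measure_mono fun ω hω =>
          show nrm (y - x) ω < e₂ from lt_of_lt_of_le hω (min_le_right _ _))))

variable (P) in
/-- the locally `L⁰`-convex weak star topology `σ_c` on the space of random linear
functionals on a module `M`, induced by the pairing with `M`. -/
noncomputable def sigmaCTop (M : Type*) [AddCommGroup M] [Module (Ω →ₘ[P] ℂ) M] :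
    TopologicalSpace (M →ₗ[Ω →ₘ[P] ℂ] (Ω →ₘ[P] ℂ)) :=
  ballTop (ι := Finset M × {ε : Ω →ₘ[P] ℝ // L0pos ε})
    (fun g i => {h | ∀ x ∈ i.1, ltAE (L0abs (h x - g x)) i.2.1})
    (by
      classical
      rintro g ⟨s, ε, hε⟩ ⟨t, δ, hδ⟩
      refine ⟨⟨s ∪ t, ⟨ε ⊓ δ, L0pos_inf hε hδ⟩⟩, fun h hh => ⟨?_, ?_⟩⟩
      · exact fun x hx => (ltAE_inf (hh x (Finset.mem_union_left t hx))).1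
      · exact fun x hx => (ltAE_inf (hh x (Finset.mem_union_right s hx))).2)

variable (P) in
/-- the `(ε,λ)` weak star topology `σ_{(ε,λ)}` on the space of random linear functionals
on a module `M`, induced by the pairing with `M`. -/
noncomputable def sigmaElTop (M : Type*) [AddCommGroup M] [Module (Ω →ₘ[P] ℂ) M] :
    TopologicalSpace (M →ₗ[Ω →ₘ[P] ℂ] (Ω →ₘ[P] ℂ)) :=
  ballTop (ι := Finset M × {e : ℝ // 0 < e} × {l : ℝ // 0 < l ∧ l < 1})
    (fun g i => {h | ∀ x ∈ i.1,
      ENNReal.ofReal (1 - i.2.2.1) < P {ω | (L0abs (h x - g x)) ω < i.2.1.1}})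
    (by
      classical
      rintro g ⟨s, ⟨e₁, he₁⟩, ⟨l₁, hl₁⟩⟩ ⟨t, ⟨e₂, he₂⟩, ⟨l₂, hl₂⟩⟩
      refine ⟨⟨s ∪ t, ⟨min e₁ e₂, lt_min he₁ he₂⟩,
        ⟨min l₁ l₂, lt_min hl₁.1 hl₂.1, lt_of_le_of_lt (min_le_left _ _) hl₁.2⟩⟩,
        fun h hh => ⟨fun x hx => ?_, fun x hx => ?_⟩⟩
      · refine lt_of_le_of_lt (ENNReal.ofReal_le_ofReal (by
          have := min_le_left l₁ l₂; linarith))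
          ((hh x (Finset.mem_union_left t hx)).trans_le (measure_mono fun ω hω =>
            show (L0abs (h x - g x)) ω < e₁ from lt_of_lt_of_le hω (min_le_left _ _)))
      · refine lt_of_le_of_lt (ENNReal.ofReal_le_ofReal (by
          have := min_le_right l₁ l₂; linarith))
          ((hh x (Finset.mem_union_right s hx)).trans_le (measure_mono fun ω hω =>
            show (L0abs (h x - g x)) ω < e₂ from lt_of_lt_of_le hω (min_le_right _ _))))

end Topologies

end RNM


namespace GW
open MeasureTheory RNM Filter Topology

lemma mem_closure_ballTop {X ι : Type*} [Nonempty ι] (ball : X → ι → Set X)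
    (dir : ∀ x i j, ∃ k, ball x k ⊆ ball x i ∩ ball x j) (S : Set X) (x : X)
    (h : ∀ i, (ball x i ∩ S).Nonempty) :
    x ∈ @closure X (ballTop ball dir) S := by
  letI := ballTop ball dir
  rw [mem_closure_iff]
  intro o ho hx
  obtain ⟨i, hi⟩ := ho x hx
  obtain ⟨y, hy1, hy2⟩ := h i
  exact ⟨y, hi hy1, hy2⟩

noncomputable def phi (a : ℝ) : ℝ := a / (1 + a)

lemma phi_mono {a b : ℝ} (ha : 0 ≤ a) (hab : a ≤ b) : phi a ≤ phi b := by
  have h1 : 0 < 1 + a := by linarith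
  have h2 : 0 < 1 + b := by linarith
  rw [phi, phi, div_le_div_iff₀ h1 h2]; nlinarith

lemma phi_inj {a b : ℝ} (ha : 0 ≤ a) (hb : 0 ≤ b) (h : phi a = phi b) : a = b := by
  have h1 : 0 < 1 + a := by linarith
  have h2 : 0 < 1 + b := by linarith
  rw [phi, phi, div_eq_div_iff h1.ne' h2.ne'] at h; nlinarith

lemma phi_nonneg {a : ℝ} (ha : 0 ≤ a) : 0 ≤ phi a := div_nonneg ha (by linarith)

lemma phi_le_one {a : ℝ} (ha : 0 ≤ a) : phi a ≤ 1 := by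
  rw [phi, div_le_one (by linarith)]; linarith

lemma continuousAt_phi {a : ℝ} (ha : 0 ≤ a) : ContinuousAt phi a := by
  have h1 : (0:ℝ) < 1 + a := by linarith
  exact continuousAt_id.div (continuousAt_const.add continuousAt_id) h1.ne'

lemma cparallel (u v : ℂ) :
     ‖u + v‖ ^ 2 +  ‖u - v‖ ^ 2
      = 2 * ‖u‖ ^ 2 + 2 * ‖v‖ ^ 2 := by
  simp only [Complex.sq_norm, Complex.normSq_apply, Complex.add_re, Complex.add_im,
    Complex.sub_re, Complex.sub_im]
  ring

lemma cpar (a b c : ℂ) :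
     ‖a - b‖ ^ 2 = 2 *  ‖a - c‖ ^ 2 + 2 *  ‖b - c‖ ^ 2
      - 4 *  ‖(2⁻¹ : ℂ) * a + (2⁻¹ : ℂ) * b - c‖ ^ 2 := by
  have h := cparallel (a - c) (b - c)
  have e1 : (2⁻¹ : ℂ) * a + (2⁻¹ : ℂ) * b - c = ((a - c) + (b - c)) * (2 : ℂ)⁻¹ := by ring
  have e2 :  ‖((a - c) + (b - c)) * (2 : ℂ)⁻¹‖ ^ 2
      =  ‖(a - c) + (b - c)‖ ^ 2 / 4 := by
    rw [norm_mul, norm_inv, Complex.norm_two, mul_pow]; ring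
  have e3 : a - b = (a - c) - (b - c) := by ring
  rw [e1, e2, e3]; linarith

lemma cexpand (t w h : ℂ) :
     ‖t * w - h‖ ^ 2
      = Complex.normSq t * ‖w‖ ^ 2 - 2 * (t * (w * (starRingEnd ℂ) h)).re
        + ‖h‖ ^ 2 := by
  simp only [Complex.sq_norm, Complex.normSq_apply, Complex.sub_re, Complex.sub_im,
    Complex.mul_re, Complex.mul_im, Complex.conj_re, Complex.conj_im]
  ring

variable {Ω : Type} [MeasurableSpace Ω] {P : Measure Ω}

lemma coeFn_finset_sum {ι : Type*} (t : Finset ι) (F : ι → Ω →ₘ[P] ℂ) :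
    ∀ᵐ ω ∂P, (∑ i ∈ t, F i) ω = ∑ i ∈ t, (F i) ω := by
  classical
  induction t using Finset.induction_on with
  | empty => simpa using zero_ae (P := P) ℂ
  | insert a t₀ hnotmem ih =>
      filter_upwards [add_ae (F a) (∑ i ∈ t₀, F i), ih] with ω h1 h2
      rw [Finset.sum_insert hnotmem, h1, h2, Finset.sum_insert hnotmem]

lemma conjC_ae (ξ : Ω →ₘ[P] ℂ) : ∀ᵐ ω ∂P, (conjC ξ) ω = (starRingEnd ℂ) (ξ ω) :=
  AEEqFun.coeFn_comp _ _ ξ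

end GW
namespace GW
open MeasureTheory RNM Filter Topology

variable {Ω : Type} [MeasurableSpace Ω] {P : Measure Ω}

set_option maxHeartbeats 1000000 in
theorem key [IsProbabilityMeasure P] {E : Type*} [AddCommGroup E]
    [Module (Ω →ₘ[P] ℂ) E] (nrm : E → Ω →ₘ[P] ℝ)
    (l : ↥(rdual nrm) →ₗ[Ω →ₘ[P] ℂ] (Ω →ₘ[P] ℂ))
    (s : Finset ↥(rdual nrm)) {e lam : ℝ} (he : 0 < e) (hlam0 : 0 < lam) (hlam1 : lam < 1) :
    ∃ x : E, ∀ f ∈ s,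
      ENNReal.ofReal (1 - lam) < P {ω | L0abs ((Jmap nrm x) f - l f) ω < e} := by
  classical
  haveI : Nonempty E := ⟨0⟩
  set D : E → Ω → ℝ :=
    fun x ω => ∑ f ∈ s,  ‖(f.1 x) ω - (l f) ω‖ ^ 2 with hD
  have hDmeas : ∀ x, Measurable (D x) := by
    intro x
    apply Finset.measurable_sum
    intro f _
    exact ((continuous_norm.measurable.comp
      (((f.1 x).stronglyMeasurable.measurable).sub
        ((l f).stronglyMeasurable.measurable))).pow_const 2)
  have hDnonneg : ∀ x ω, 0 ≤ D x ω := fun x ω =>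
    Finset.sum_nonneg fun f _ => sq_nonneg _
  -- pointwise formula for D at an L⁰-linear combination
  have hlin2 : ∀ (ξ η : Ω →ₘ[P] ℂ) (x y : E) (f : ↥(rdual nrm)),
      ∀ᵐ ω ∂P, (f.1 (ξ • x + η • y)) ω = ξ ω * (f.1 x) ω + η ω * (f.1 y) ω := by
    intro ξ η x y f
    have hrw : f.1 (ξ • x + η • y) = ξ * f.1 x + η * f.1 y := by
      rw [map_add, LinearMap.map_smul, LinearMap.map_smul, smul_eq_mul, smul_eq_mul]
    filter_upwards [add_ae (ξ * f.1 x) (η * f.1 y), mul_ae ξ (f.1 x), mul_ae η (f.1 y)]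
      with ω h1 h2 h3
    rw [hrw, h1, h2, h3]
  have Dlin : ∀ (ξ η : Ω →ₘ[P] ℂ) (x y : E), ∀ᵐ ω ∂P,
      D (ξ • x + η • y) ω
        = ∑ f ∈ s,  ‖ξ ω * (f.1 x) ω + η ω * (f.1 y) ω - (l f) ω‖ ^ 2 := by
    intro ξ η x y
    have h := (ae_ball_iff (s.countable_toSet)).2
      (fun f (_ : f ∈ (s : Set _)) => hlin2 ξ η x y f)
    filter_upwards [h] with ω hω
    exact Finset.sum_congr rfl fun f hf => by rw [hω f (Finset.mem_coe.2 hf)]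
  -- pasting
  have hpaste : ∀ x y : E, ∃ z : E, ∀ᵐ ω ∂P, D z ω = min (D x ω) (D y ω) := by
    intro x y
    have hA : MeasurableSet {ω | D x ω ≤ D y ω} :=
      measurableSet_le (hDmeas x) (hDmeas y)
    refine ⟨indC (P := P) _ hA • x + indC (P := P) _ hA.compl • y, ?_⟩
    have h1 : ∀ᵐ ω ∂P, (indC (P := P) _ hA) ω
        = {ω | D x ω ≤ D y ω}.indicator (fun _ => (1:ℂ)) ω := AEEqFun.coeFn_mk _ _
    have h2 : ∀ᵐ ω ∂P, (indC (P := P) _ hA.compl) ω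
        = {ω | D x ω ≤ D y ω}ᶜ.indicator (fun _ => (1:ℂ)) ω := AEEqFun.coeFn_mk _ _
    filter_upwards [Dlin (indC (P := P) _ hA) (indC (P := P) _ hA.compl) x y, h1, h2] with ω hω e1 e2
    rw [hω]
    by_cases hmem : ω ∈ {ω | D x ω ≤ D y ω}
    · rw [min_eq_left hmem]
      refine Finset.sum_congr rfl fun f hf => ?_
      rw [e1, e2, Set.indicator_of_mem hmem, Set.indicator_of_notMem (by simpa using hmem)]
      norm_num
    · rw [min_eq_right (le_of_not_ge hmem)]
      refine Finset.sum_congr rfl fun f hf => ?_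
      rw [e1, e2, Set.indicator_of_notMem hmem,
        Set.indicator_of_mem (by simpa using hmem)]
      norm_num
  choose paste hpaste' using hpaste
  -- the integral functional
  have hIint : ∀ (h : Ω → ℝ), Measurable h → (∀ ω, 0 ≤ h ω) →
      Integrable (fun ω => phi (h ω)) P := by
    intro h hm h0
    refine ⟨(hm.div ((measurable_const.add hm))).aestronglyMeasurable,
      HasFiniteIntegral.of_bounded (C := 1) (ae_of_all _ fun ω => ?_)⟩
    rw [Real.norm_eq_abs, abs_of_nonneg (phi_nonneg (h0 ω))]
    exact phi_le_one (h0 ω)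
  set I : E → ℝ := fun x => ∫ ω, phi (D x ω) ∂P with hI
  have hIintD : ∀ x : E, Integrable (fun ω => phi (D x ω)) P := fun x =>
    hIint (D x) (hDmeas x) (hDnonneg x)
  have hI0 : ∀ x, 0 ≤ I x := fun x =>
    integral_nonneg fun ω => phi_nonneg (hDnonneg x ω)
  have hbdd : BddBelow (Set.range I) := ⟨0, by rintro v ⟨x, rfl⟩; exact hI0 x⟩
  set r : ℝ := ⨅ x : E, I x with hr
  have hrle : ∀ x, r ≤ I x := fun x => ciInf_le hbdd x
  have hxs : ∀ k : ℕ, ∃ x : E, I x < r + 1 / (k + 1) :=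
    fun k => exists_lt_of_ciInf_lt (lt_add_of_pos_right r (by positivity))
  choose xs hxs using hxs
  set ys : ℕ → E := fun k => Nat.rec (xs 0) (fun k z => paste z (xs (k + 1))) k with hys
  have hysmin : ∀ k, ∀ᵐ ω ∂P, D (ys (k + 1)) ω = min (D (ys k) ω) (D (xs (k + 1)) ω) :=
    fun k => hpaste' _ _
  have hae1 : ∀ᵐ ω ∂P, ∀ k, D (ys (k + 1)) ω = min (D (ys k) ω) (D (xs (k + 1)) ω) :=
    ae_all_iff.2 hysmin
  -- the a.e. infimum g
  set g : Ω → ℝ := fun ω => ⨅ k, D (ys k) ω with hg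
  have hgmeas : Measurable g := Measurable.iInf fun k => hDmeas _
  have hg0 : ∀ ω, 0 ≤ g ω := fun ω => Real.iInf_nonneg fun k => hDnonneg _ ω
  have hgle : ∀ ω k, g ω ≤ D (ys k) ω := fun ω k =>
    ciInf_le ⟨0, by rintro v ⟨j, rfl⟩; exact hDnonneg _ ω⟩ k
  have hgtend : ∀ᵐ ω ∂P, Tendsto (fun k => D (ys k) ω) atTop (𝓝 (g ω)) := by
    filter_upwards [hae1] with ω hω
    have hanti : Antitone fun k => D (ys k) ω := antitone_nat_of_succ_le fun k => by
      rw [hω k]; exact min_le_left _ _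
    exact tendsto_atTop_ciInf hanti ⟨0, by rintro v ⟨j, rfl⟩; exact hDnonneg _ ω⟩
  -- I (ys k) tends to r
  have hIys_le : ∀ k, I (ys k) ≤ I (xs k) := by
    intro k
    cases k with
    | zero => exact le_refl _
    | succ k =>
        apply integral_mono_ae (hIintD _) (hIintD _)
        filter_upwards [hysmin k] with ω hω
        rw [hω]
        exact phi_mono (le_min (hDnonneg _ ω) (hDnonneg _ ω)) (min_le_right _ _)
  have hItend : Tendsto (fun k => I (ys k)) atTop (𝓝 r) := by
    have hupper : Tendsto (fun k : ℕ => r + 1 / ((k : ℝ) + 1)) atTop (𝓝 r) := by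
      simpa using tendsto_const_nhds.add (tendsto_one_div_add_atTop_nhds_zero_nat (𝕜 := ℝ))
    exact tendsto_of_tendsto_of_tendsto_of_le_of_le tendsto_const_nhds hupper
      (fun k => hrle _) (fun k => ((hIys_le k).trans (hxs k).le))
  have hIg : ∫ ω, phi (g ω) ∂P = r := by
    have ht : Tendsto (fun k => I (ys k)) atTop (𝓝 (∫ ω, phi (g ω) ∂P)) := by
      refine tendsto_integral_of_dominated_convergence (fun _ => (1:ℝ))
        (fun k => (hIintD (ys k)).1) (integrable_const 1) (fun k => ae_of_all _ fun ω => ?_) ?_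
      · rw [Real.norm_eq_abs, abs_of_nonneg (phi_nonneg (hDnonneg _ ω))]
        exact phi_le_one (hDnonneg _ ω)
      · filter_upwards [hgtend] with ω hω
        exact ((continuousAt_phi (hg0 ω)).tendsto).comp hω
    exact tendsto_nhds_unique ht hItend
  -- Claim A : g is a.e. below every D x
  have hA : ∀ x : E, ∀ᵐ ω ∂P, g ω ≤ D x ω := by
    intro x
    have hz : ∀ k, ∀ᵐ ω ∂P, D (paste (ys k) x) ω = min (D (ys k) ω) (D x ω) :=
      fun k => hpaste' _ _
    have hIzk : ∀ k, I (paste (ys k) x) = ∫ ω, phi (min (D (ys k) ω) (D x ω)) ∂P :=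
      fun k => integral_congr_ae ((hz k).mono fun ω hω => by simp only [hω])
    have hint1 : Integrable (fun ω => phi (min (g ω) (D x ω))) P :=
      hIint _ (hgmeas.min (hDmeas x)) (fun ω => le_min (hg0 ω) (hDnonneg x ω))
    have hint2 : Integrable (fun ω => phi (g ω)) P := hIint _ hgmeas hg0
    have hTlim : Tendsto (fun k => ∫ ω, phi (min (D (ys k) ω) (D x ω)) ∂P) atTop
        (𝓝 (∫ ω, phi (min (g ω) (D x ω)) ∂P)) := by
      refine tendsto_integral_of_dominated_convergence (fun _ => (1:ℝ))
        (fun k => (hIint _ ((hDmeas _).min (hDmeas x))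
          (fun ω => le_min (hDnonneg _ ω) (hDnonneg x ω))).1)
        (integrable_const 1) (fun k => ae_of_all _ fun ω => ?_) ?_
      · rw [Real.norm_eq_abs,
          abs_of_nonneg (phi_nonneg (le_min (hDnonneg _ ω) (hDnonneg x ω)))]
        exact phi_le_one (le_min (hDnonneg _ ω) (hDnonneg x ω))
      · filter_upwards [hgtend] with ω hω
        exact ((continuousAt_phi (le_min (hg0 ω) (hDnonneg x ω))).tendsto).comp
          (hω.min tendsto_const_nhds)
    have hge : r ≤ ∫ ω, phi (min (g ω) (D x ω)) ∂P :=
      ge_of_tendsto' hTlim fun k => le_of_le_of_eq (hrle (paste (ys k) x)) (hIzk k)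
    have hnn : 0 ≤ᵐ[P] fun ω => phi (g ω) - phi (min (g ω) (D x ω)) :=
      ae_of_all _ fun ω => sub_nonneg.2
        (phi_mono (le_min (hg0 ω) (hDnonneg x ω)) (min_le_left _ _))
    have hzero : (fun ω => phi (g ω) - phi (min (g ω) (D x ω))) =ᵐ[P] 0 := by
      refine (integral_eq_zero_iff_of_nonneg_ae hnn (hint2.sub hint1)).1 ?_
      have h1 : ∫ ω, (phi (g ω) - phi (min (g ω) (D x ω))) ∂P ≤ 0 := by
        rw [integral_sub hint2 hint1, hIg]; linarith
      exact le_antisymm h1 (integral_nonneg_of_ae hnn)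
    filter_upwards [hzero] with ω hω
    have heq : phi (min (g ω) (D x ω)) = phi (g ω) := by
      have : phi (g ω) - phi (min (g ω) (D x ω)) = 0 := hω
      linarith
    have := phi_inj (le_min (hg0 ω) (hDnonneg x ω)) (hg0 ω) heq
    exact min_eq_left_iff.1 this
  -- parallelogram bound
  set half : Ω →ₘ[P] ℂ := AEEqFun.const Ω (2⁻¹ : ℂ) with hhalf
  have hpar : ∀ j k : ℕ, ∀ᵐ ω ∂P,
      ∑ f ∈ s,  ‖(f.1 (ys j)) ω - (f.1 (ys k)) ω‖ ^ 2
        ≤ 2 * D (ys j) ω + 2 * D (ys k) ω - 4 * g ω := by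
    intro j k
    filter_upwards [Dlin half half (ys j) (ys k), hA (half • ys j + half • ys k),
      AEEqFun.coeFn_const (α := Ω) (μ := P) (2⁻¹ : ℂ)] with ω h1 h2 hc
    have hmid : D (half • ys j + half • ys k) ω
        = ∑ f ∈ s,  ‖(2⁻¹ : ℂ) * (f.1 (ys j)) ω + (2⁻¹ : ℂ) * (f.1 (ys k)) ω
          - (l f) ω‖ ^ 2 := by
      rw [h1]
      exact Finset.sum_congr rfl fun f hf => by simp only [hhalf, hc, Function.const_apply]
    have hsum : ∑ f ∈ s,  ‖(f.1 (ys j)) ω - (f.1 (ys k)) ω‖ ^ 2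
        = 2 * D (ys j) ω + 2 * D (ys k) ω - 4 * D (half • ys j + half • ys k) ω := by
      rw [hmid, hD]
      rw [Finset.mul_sum, Finset.mul_sum, Finset.mul_sum, ← Finset.sum_add_distrib,
        ← Finset.sum_sub_distrib]
      exact Finset.sum_congr rfl fun f hf => cpar _ _ _
    rw [hsum]
    have := h2
    linarith
  -- a.e. Cauchy property and limits
  have hkey : ∀ f ∈ s, ∃ uf : Ω →ₘ[P] ℂ,
      ∀ᵐ ω ∂P, Tendsto (fun k => (f.1 (ys k)) ω) atTop (𝓝 (uf ω)) := by
    intro f hf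
    have hparall : ∀ᵐ ω ∂P, ∀ j k : ℕ,
        ∑ f ∈ s,  ‖(f.1 (ys j)) ω - (f.1 (ys k)) ω‖ ^ 2
          ≤ 2 * D (ys j) ω + 2 * D (ys k) ω - 4 * g ω :=
      ae_all_iff.2 fun j => ae_all_iff.2 fun k => hpar j k
    have hcauchy : ∀ᵐ ω ∂P, CauchySeq (fun k => (f.1 (ys k)) ω) := by
      filter_upwards [hparall, hgtend] with ω h1 h2
      rw [Metric.cauchySeq_iff]
      intro ε hε
      have hev : ∀ᶠ k in atTop, D (ys k) ω < g ω + ε ^ 2 / 4 :=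
        h2.eventually_lt_const (lt_add_of_pos_right _ (by positivity))
      obtain ⟨N, hN⟩ := eventually_atTop.1 hev
      refine ⟨N, fun m hm n hn => ?_⟩
      rw [Complex.dist_eq]
      have hsingle :  ‖(f.1 (ys m)) ω - (f.1 (ys n)) ω‖ ^ 2
          ≤ ∑ f ∈ s,  ‖(f.1 (ys m)) ω - (f.1 (ys n)) ω‖ ^ 2 :=
        Finset.single_le_sum (f := fun f' : ↥(rdual nrm) =>
           ‖(f'.1 (ys m)) ω - (f'.1 (ys n)) ω‖ ^ 2)
          (fun _ _ => sq_nonneg _) hf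
      have hlt :  ‖(f.1 (ys m)) ω - (f.1 (ys n)) ω‖ ^ 2 < ε ^ 2 := by
        have := h1 m n
        have h3 := hN m hm
        have h4 := hN n hn
        nlinarith
      exact lt_of_pow_lt_pow_left₀ 2 hε.le hlt
    set u : Ω → ℂ := fun ω => limUnder atTop (fun k => (f.1 (ys k)) ω) with hu
    have htend : ∀ᵐ ω ∂P, Tendsto (fun k => (f.1 (ys k)) ω) atTop (𝓝 (u ω)) := by
      filter_upwards [hcauchy] with ω hc
      obtain ⟨a, ha⟩ := cauchySeq_tendsto_of_complete hc
      rw [hu]; simpa [ha.limUnder_eq] using ha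
    refine ⟨AEEqFun.mk u (aestronglyMeasurable_of_tendsto_ae atTop
      (fun k => (f.1 (ys k)).aestronglyMeasurable) htend), ?_⟩
    filter_upwards [htend, AEEqFun.coeFn_mk u (aestronglyMeasurable_of_tendsto_ae atTop
      (fun k => (f.1 (ys k)).aestronglyMeasurable) htend)] with ω h1 h2
    rw [h2]; exact h1
  choose! uL huL using hkey
  have hall : ∀ᵐ ω ∂P, ∀ f ∈ s, Tendsto (fun k => (f.1 (ys k)) ω) atTop (𝓝 ((uL f) ω)) :=
    (ae_ball_iff s.countable_toSet).2 fun f hf => huL f hf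
  -- identification of g
  have hgeq : ∀ᵐ ω ∂P, g ω = ∑ f ∈ s,  ‖(l f) ω - (uL f) ω‖ ^ 2 := by
    filter_upwards [hgtend, hall] with ω h1 h2
    have h3 : Tendsto (fun k => D (ys k) ω) atTop
        (𝓝 (∑ f ∈ s,  ‖(uL f) ω - (l f) ω‖ ^ 2)) := by
      rw [hD]
      exact tendsto_finset_sum _ fun f hf =>
        (((continuous_norm.tendsto _).comp
          ((h2 f (Finset.mem_coe.2 hf)).sub tendsto_const_nhds)).pow 2)
    rw [tendsto_nhds_unique h1 h3]
    exact Finset.sum_congr rfl fun f hf => by rw [norm_sub_rev]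
  -- Claim C
  have hC : ∀ x : E, ∀ᵐ ω ∂P,
      ∑ f ∈ s, ((f.1 x) ω - (uL f) ω) * (starRingEnd ℂ) ((l f) ω - (uL f) ω) = 0 := by
    intro x
    set cL : Ω →ₘ[P] ℂ := ∑ f ∈ s, (f.1 x - uL f) * conjC (l f - uL f) with hcL
    have hcf : ∀ᵐ ω ∂P, cL ω
        = ∑ f ∈ s, ((f.1 x) ω - (uL f) ω) * (starRingEnd ℂ) ((l f) ω - (uL f) ω) := by
      have hterm : ∀ f ∈ (s : Set _), ∀ᵐ ω ∂P,
          ((f.1 x - uL f) * conjC (l f - uL f)) ω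
            = ((f.1 x) ω - (uL f) ω) * (starRingEnd ℂ) ((l f) ω - (uL f) ω) := by
        intro f _
        filter_upwards [mul_ae (f.1 x - uL f) (conjC (l f - uL f)),
          sub_ae (f.1 x) (uL f), sub_ae (l f) (uL f), conjC_ae (l f - uL f)]
          with ω h1 h2 h3 h4
        rw [h1, h2, h4, h3]
      filter_upwards [coeFn_finset_sum s (fun f => (f.1 x - uL f) * conjC (l f - uL f)),
        (ae_ball_iff s.countable_toSet).2 hterm] with ω h1 h2
      rw [hcL, h1]
      exact Finset.sum_congr rfl fun f hf => h2 f (Finset.mem_coe.2 hf)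
    have hqpos : ∀ n : ℕ, 0 < ((n : ℝ) + 1)⁻¹ := fun n => by positivity
    set ξ : ℕ → (Ω →ₘ[P] ℂ) := fun n => AEEqFun.const Ω ((((n : ℝ) + 1)⁻¹ : ℝ) : ℂ) * conjC cL with hξ
    have hξae : ∀ n : ℕ, ∀ᵐ ω ∂P, (ξ n) ω = ((((n : ℝ) + 1)⁻¹ : ℝ) : ℂ) * (starRingEnd ℂ) (cL ω) := by
      intro n
      filter_upwards [mul_ae (AEEqFun.const Ω ((((n : ℝ) + 1)⁻¹ : ℝ) : ℂ)) (conjC cL),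
        AEEqFun.coeFn_const (α := Ω) (μ := P) ((((n : ℝ) + 1)⁻¹ : ℝ) : ℂ), conjC_ae cL] with ω h1 h2 h3
      rw [hξ]; rw [h1, h2, h3]; rfl
    have hmain : ∀ᵐ ω ∂P, ∀ n k : ℕ,
        g ω ≤ ∑ f ∈ s,  ‖(1 - (ξ n) ω) * (f.1 (ys k)) ω
          + (ξ n) ω * (f.1 x) ω - (l f) ω‖ ^ 2 := by
      refine ae_all_iff.2 fun n => ae_all_iff.2 fun k => ?_
      filter_upwards [hA ((1 - ξ n) • ys k + ξ n • x), Dlin (1 - ξ n) (ξ n) (ys k) x,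
        sub_ae (1 : Ω →ₘ[P] ℂ) (ξ n), one_ae (P := P) ℂ] with ω h1 h2 h3 h4
      rw [h2] at h1
      refine h1.trans_eq (Finset.sum_congr rfl fun f hf => ?_)
      rw [h3, h4]
    filter_upwards [hmain, hall, hgeq, hcf, ae_all_iff.2 hξae] with ω h1 h2 h3 h4 h5
    set c : ℂ := ∑ f ∈ s, ((f.1 x) ω - (uL f) ω) * (starRingEnd ℂ) ((l f) ω - (uL f) ω)
      with hcdef
    by_contra hc0
    have hW : ∀ n : ℕ, g ω ≤ ∑ f ∈ s, 
        ‖((((n : ℝ) + 1)⁻¹ : ℝ) : ℂ) * (starRingEnd ℂ) c * ((f.1 x) ω - (uL f) ω)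
          - ((l f) ω - (uL f) ω)‖ ^ 2 := by
      intro n
      have htendk : Tendsto (fun k => ∑ f ∈ s,  ‖(1 - (ξ n) ω) * (f.1 (ys k)) ω
          + (ξ n) ω * (f.1 x) ω - (l f) ω‖ ^ 2) atTop
          (𝓝 (∑ f ∈ s,  ‖(1 - (ξ n) ω) * (uL f) ω
          + (ξ n) ω * (f.1 x) ω - (l f) ω‖ ^ 2)) :=
        tendsto_finset_sum _ fun f hf => ((continuous_norm.tendsto _).comp
          (((tendsto_const_nhds.mul (h2 f hf)).add tendsto_const_nhds).sub
            tendsto_const_nhds)).pow 2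
      have hlim : g ω ≤ ∑ f ∈ s,  ‖(1 - (ξ n) ω) * (uL f) ω
          + (ξ n) ω * (f.1 x) ω - (l f) ω‖ ^ 2 :=
        ge_of_tendsto' htendk (fun k => h1 n k)
      refine hlim.trans_eq (Finset.sum_congr rfl fun f hf => ?_)
      rw [h5 n, h4]
      congr 2
      ring
    set W : ℝ := ∑ f ∈ s,  ‖(f.1 x) ω - (uL f) ω‖ ^ 2 with hWdef
    have hineq : ∀ n : ℕ,
        0 ≤ (((n : ℝ) + 1)⁻¹)^2 * Complex.normSq c * W - 2 * (((n : ℝ) + 1)⁻¹ * Complex.normSq c) := by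
      intro n
      have h6 := hW n
      have hrw : ∑ f ∈ s, 
          ‖((((n : ℝ) + 1)⁻¹ : ℝ) : ℂ) * (starRingEnd ℂ) c * ((f.1 x) ω - (uL f) ω)
            - ((l f) ω - (uL f) ω)‖ ^ 2
          = Complex.normSq (((((n : ℝ) + 1)⁻¹ : ℝ) : ℂ) * (starRingEnd ℂ) c) * W
            - 2 * ((((((n : ℝ) + 1)⁻¹ : ℝ) : ℂ) * (starRingEnd ℂ) c) * c).re
            + ∑ f ∈ s,  ‖(l f) ω - (uL f) ω‖ ^ 2 := by
        rw [show (∑ f ∈ s, 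
            ‖((((n : ℝ) + 1)⁻¹ : ℝ) : ℂ) * (starRingEnd ℂ) c * ((f.1 x) ω - (uL f) ω)
              - ((l f) ω - (uL f) ω)‖ ^ 2)
            = ∑ f ∈ s, (Complex.normSq (((((n : ℝ) + 1)⁻¹ : ℝ) : ℂ) * (starRingEnd ℂ) c)
                *  ‖(f.1 x) ω - (uL f) ω‖ ^ 2
              - 2 * ((((((n : ℝ) + 1)⁻¹ : ℝ) : ℂ) * (starRingEnd ℂ) c)
                * (((f.1 x) ω - (uL f) ω) * (starRingEnd ℂ) ((l f) ω - (uL f) ω))).re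
              +  ‖(l f) ω - (uL f) ω‖ ^ 2)
          from Finset.sum_congr rfl fun f hf => cexpand _ _ _]
        rw [Finset.sum_add_distrib, Finset.sum_sub_distrib, ← Finset.mul_sum, ← hWdef]
        congr 2
        rw [← Finset.mul_sum, ← Complex.re_sum, ← Finset.mul_sum, ← hcdef]
      rw [hrw] at h6
      have e1 : Complex.normSq (((((n : ℝ) + 1)⁻¹ : ℝ) : ℂ) * (starRingEnd ℂ) c)
          = (((n : ℝ) + 1)⁻¹)^2 * Complex.normSq c := by
        rw [Complex.normSq_mul, Complex.normSq_conj, Complex.normSq_ofReal]; ring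
      have e2 : ((((((n : ℝ) + 1)⁻¹ : ℝ) : ℂ) * (starRingEnd ℂ) c) * c).re
          = ((n : ℝ) + 1)⁻¹ * Complex.normSq c := by
        rw [mul_assoc, mul_comm ((starRingEnd ℂ) c) c, Complex.mul_conj,
          ← Complex.ofReal_mul, Complex.ofReal_re]
      rw [e1, e2] at h6
      rw [h3] at h6
      linarith
    have hcpos : 0 < Complex.normSq c := Complex.normSq_pos.2 hc0
    have hWnn : 0 ≤ W := Finset.sum_nonneg fun _ _ => sq_nonneg _
    obtain ⟨n, hn⟩ := exists_nat_gt (W / 2)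
    have h7 := hineq n
    have hn1 : (0:ℝ) < (n:ℝ) + 1 := by positivity
    have key2 : (((n : ℝ) + 1)⁻¹)^2 * Complex.normSq c * W * ((n:ℝ)+1)^2
        = Complex.normSq c * W := by field_simp
    have key3 : (((n : ℝ) + 1)⁻¹ * Complex.normSq c) * ((n:ℝ)+1)^2
        = Complex.normSq c * ((n:ℝ)+1) := by field_simp
    have hprod := mul_nonneg h7 (sq_nonneg ((n:ℝ)+1))
    have h8 : 0 ≤ Complex.normSq c * W - 2*(Complex.normSq c * ((n:ℝ)+1)) := by
      nlinarith [hprod, key2, key3]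
    have h9 : 0 < Complex.normSq c * (2*((n:ℝ)+1) - W) :=
      mul_pos hcpos (by linarith)
    nlinarith [h8, h9]
  -- Claim C at x = 0
  have hzeroes : ∀ᵐ ω ∂P, ∀ f ∈ (s : Set ↥(rdual nrm)), (f.1 (0:E)) ω = 0 := by
    refine (ae_ball_iff s.countable_toSet).2 fun f _ => ?_
    have hz : f.1 (0:E) = 0 := map_zero f.1
    rw [hz]
    exact zero_ae ℂ
  have hC0' : ∀ᵐ ω ∂P,
      ∑ f ∈ s, (uL f) ω * (starRingEnd ℂ) ((l f) ω - (uL f) ω) = 0 := by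
    filter_upwards [hC 0, hzeroes] with ω h1 h2
    have h3 : ∑ f ∈ s, ((f.1 (0:E)) ω - (uL f) ω) * (starRingEnd ℂ) ((l f) ω - (uL f) ω)
        = -∑ f ∈ s, (uL f) ω * (starRingEnd ℂ) ((l f) ω - (uL f) ω) := by
      rw [← Finset.sum_neg_distrib]
      exact Finset.sum_congr rfl fun f hf => by
        rw [h2 f (Finset.mem_coe.2 hf)]; ring
    rw [h3] at h1
    exact neg_eq_zero.mp h1
  -- the functional G vanishes
  set G : ↥(rdual nrm) := ∑ f ∈ s, conjC (l f - uL f) • f with hG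
  have hGapp : ∀ x : E, ((G : E →ₗ[Ω →ₘ[P] ℂ] (Ω →ₘ[P] ℂ)) x)
      = ∑ f ∈ s, conjC (l f - uL f) * (f.1 x) := by
    intro x
    have h1 : ((G : ↥(rdual nrm)) : E →ₗ[Ω →ₘ[P] ℂ] (Ω →ₘ[P] ℂ))
        = ∑ f ∈ s, conjC (l f - uL f) • (f : E →ₗ[Ω →ₘ[P] ℂ] (Ω →ₘ[P] ℂ)) := by
      rw [hG]
      rw [show ((∑ f ∈ s, conjC (l f - uL f) • f : ↥(rdual nrm))
          : E →ₗ[Ω →ₘ[P] ℂ] (Ω →ₘ[P] ℂ))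
          = (rdual nrm).subtype (∑ f ∈ s, conjC (l f - uL f) • f) from rfl, map_sum]
      exact Finset.sum_congr rfl fun f hf => rfl
    rw [h1, LinearMap.sum_apply]
    exact Finset.sum_congr rfl fun f hf => by rw [LinearMap.smul_apply, smul_eq_mul]
  have hGzero : ∀ x : E, ((G : E →ₗ[Ω →ₘ[P] ℂ] (Ω →ₘ[P] ℂ)) x) = 0 := by
    intro x
    rw [hGapp x]
    apply AEEqFun.ext
    have hterm : ∀ f ∈ (s : Set _), ∀ᵐ ω ∂P, (conjC (l f - uL f) * (f.1 x)) ω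
        = (starRingEnd ℂ) ((l f) ω - (uL f) ω) * (f.1 x) ω := by
      intro f _
      filter_upwards [mul_ae (conjC (l f - uL f)) (f.1 x), conjC_ae (l f - uL f),
        sub_ae (l f) (uL f)] with ω h1 h2 h3
      rw [h1, h2, h3]
    filter_upwards [coeFn_finset_sum s (fun f => conjC (l f - uL f) * (f.1 x)),
      (ae_ball_iff s.countable_toSet).2 hterm, hC x, hC0', zero_ae (P := P) ℂ]
      with ω h1 h2 h3 h4 h5
    rw [h1, h5]
    have h6 : ∑ f ∈ s, (conjC (l f - uL f) * (f.1 x)) ω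
        = ∑ f ∈ s, (starRingEnd ℂ) ((l f) ω - (uL f) ω) * (f.1 x) ω :=
      Finset.sum_congr rfl fun f hf => h2 f (Finset.mem_coe.2 hf)
    have h7 : ∑ f ∈ s, (starRingEnd ℂ) ((l f) ω - (uL f) ω) * (f.1 x) ω
        = (∑ f ∈ s, ((f.1 x) ω - (uL f) ω) * (starRingEnd ℂ) ((l f) ω - (uL f) ω))
          + ∑ f ∈ s, (uL f) ω * (starRingEnd ℂ) ((l f) ω - (uL f) ω) := by
      rw [← Finset.sum_add_distrib]
      exact Finset.sum_congr rfl fun f hf => by ring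
    rw [h6, h7, h3, h4, add_zero]
  have hGeq0 : G = 0 := by
    apply Subtype.ext
    apply LinearMap.ext
    intro x
    rw [hGzero x]
    rfl
  have hlG : ∑ f ∈ s, conjC (l f - uL f) * (l f) = 0 := by
    have h1 : l G = 0 := by rw [hGeq0, map_zero]
    rw [hG, map_sum] at h1
    have h2 : ∑ f ∈ s, l (conjC (l f - uL f) • f)
        = ∑ f ∈ s, conjC (l f - uL f) * (l f) :=
      Finset.sum_congr rfl fun f hf => by rw [LinearMap.map_smul, smul_eq_mul]
    rw [h2] at h1
    exact h1
  have hzeta : ∀ᵐ ω ∂P,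
      ∑ f ∈ s, (starRingEnd ℂ) ((l f) ω - (uL f) ω) * (l f) ω = 0 := by
    have hterm : ∀ f ∈ (s : Set _), ∀ᵐ ω ∂P, (conjC (l f - uL f) * (l f)) ω
        = (starRingEnd ℂ) ((l f) ω - (uL f) ω) * (l f) ω := by
      intro f _
      filter_upwards [mul_ae (conjC (l f - uL f)) (l f), conjC_ae (l f - uL f),
        sub_ae (l f) (uL f)] with ω h1 h2 h3
      rw [h1, h2, h3]
    filter_upwards [coeFn_finset_sum s (fun f => conjC (l f - uL f) * (l f)),
      (ae_ball_iff s.countable_toSet).2 hterm, zero_ae (P := P) ℂ] with ω h1 h2 h3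
    have h5 : ∑ f ∈ s, (starRingEnd ℂ) ((l f) ω - (uL f) ω) * (l f) ω
        = ∑ f ∈ s, (conjC (l f - uL f) * (l f)) ω :=
      (Finset.sum_congr rfl fun f hf => (h2 f (Finset.mem_coe.2 hf)).symm)
    rw [h5, ← h1, hlG, h3]
  -- conclusion : g = 0 a.e.
  have hg0ae : ∀ᵐ ω ∂P, g ω = 0 := by
    filter_upwards [hgeq, hzeta, hC0'] with ω h1 h2 h3
    have h4 : ∑ f ∈ s, (starRingEnd ℂ) ((l f) ω - (uL f) ω) * ((l f) ω - (uL f) ω)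
        = 0 := by
      have h5 : ∑ f ∈ s, (starRingEnd ℂ) ((l f) ω - (uL f) ω) * ((l f) ω - (uL f) ω)
          = ∑ f ∈ s, ((starRingEnd ℂ) ((l f) ω - (uL f) ω) * (l f) ω
            - (uL f) ω * (starRingEnd ℂ) ((l f) ω - (uL f) ω)) :=
        Finset.sum_congr rfl fun f hf => by ring
      rw [h5, Finset.sum_sub_distrib, h2, h3, sub_zero]
    have h6 : ∑ f ∈ s, (Complex.normSq ((l f) ω - (uL f) ω) : ℂ) = 0 := by
      rw [← h4]
      exact Finset.sum_congr rfl fun f hf => by rw [mul_comm, Complex.mul_conj]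
    have h7 : ∑ f ∈ s, Complex.normSq ((l f) ω - (uL f) ω) = 0 := by
      exact_mod_cast h6
    rw [h1]
    rw [show (∑ f ∈ s,  ‖(l f) ω - (uL f) ω‖ ^ 2)
        = ∑ f ∈ s, Complex.normSq ((l f) ω - (uL f) ω) from
      Finset.sum_congr rfl fun f hf => Complex.sq_norm _, h7]
  -- convergence in probability finish
  have hDtend0 : ∀ᵐ ω ∂P, Tendsto (fun k => D (ys k) ω) atTop (𝓝 0) := by
    filter_upwards [hgtend, hg0ae] with ω h1 h2
    rwa [h2] at h1
  have hmeas2 : TendstoInMeasure P (fun k => D (ys k)) atTop (fun _ => (0:ℝ)) :=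
    tendstoInMeasure_of_tendsto_ae (fun k => (hDmeas _).aestronglyMeasurable) hDtend0
  have hev := (hmeas2 (ENNReal.ofReal (e^2)) (ENNReal.ofReal_pos.2 (by positivity))).eventually_lt_const
    (ENNReal.ofReal_pos.2 hlam0)
  obtain ⟨k, hk⟩ := hev.exists
  refine ⟨ys k, fun f hf => ?_⟩
  set T : Set Ω := {ω | e^2 ≤ dist (D (ys k) ω) 0} with hT
  have hTmeas : MeasurableSet T :=
    measurableSet_le measurable_const ((hDmeas _).dist measurable_const)
  have hsub : ∀ᵐ ω ∂P, ω ∈ Tᶜ → ω ∈ {ω | L0abs ((Jmap nrm (ys k)) f - l f) ω < e} := by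
    filter_upwards [L0abs_ae ((Jmap nrm (ys k)) f - l f),
      sub_ae ((Jmap nrm (ys k)) f) (l f)] with ω h1 h2 hmem
    have hm : ¬ e^2 ≤ dist (D (ys k) ω) 0 := hmem
    rw [Real.dist_0_eq_abs, abs_of_nonneg (hDnonneg _ ω)] at hm
    have h3 : D (ys k) ω < e ^ 2 := not_le.1 hm
    show L0abs ((Jmap nrm (ys k)) f - l f) ω < e
    rw [h1, h2]
    have h4 :  ‖(f.1 (ys k)) ω - (l f) ω‖^2 ≤ D (ys k) ω :=
      Finset.single_le_sum (f := fun f' : ↥(rdual nrm) =>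
         ‖(f'.1 (ys k)) ω - (l f') ω‖^2) (fun _ _ => sq_nonneg _) hf
    exact lt_of_pow_lt_pow_left₀ 2 he.le (lt_of_le_of_lt h4 h3)
  have h5 : P Tᶜ ≤ P {ω | L0abs ((Jmap nrm (ys k)) f - l f) ω < e} :=
    measure_mono_ae (hsub.mono fun ω h => h)
  have h6 : P Tᶜ = 1 - P T := by
    rw [measure_compl hTmeas (measure_ne_top P T), measure_univ]
  have hk' : P T < ENNReal.ofReal lam := by
    convert hk using 2
    ext ω
    simp only [hT, Set.mem_setOf_eq, edist_dist, ENNReal.ofReal_le_ofReal_iff dist_nonneg]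
  refine lt_of_lt_of_le ?_ h5
  rw [h6, lt_tsub_iff_right]
  calc ENNReal.ofReal (1 - lam) + P T
      < ENNReal.ofReal (1 - lam) + ENNReal.ofReal lam :=
        ENNReal.add_lt_add_left ENNReal.ofReal_ne_top hk'
    _ = 1 := by
        rw [← ENNReal.ofReal_add (by linarith) hlam0.le]
        norm_num

end GW
open MeasureTheory RNM in
/-- Goldstine–Weston theorem in `RN` modules, `(ε,λ)` version (Theorem 4.3): for any `RN`
module `(E, nrm)` over `ℂ` with base `(Ω,𝓕,P)`, the image `J(E)` of the random natural
embedding is dense in `E**` for the `(ε,λ)` weak star topology `σ_{(ε,λ)}(E**,E*)`. -/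
theorem goldstine_weston_eps_lambda {Ω : Type} [MeasurableSpace Ω] {P : Measure Ω}
    [IsProbabilityMeasure P] {E : Type*} [AddCommGroup E] [Module (Ω →ₘ[P] ℂ) E]
    (nrm : E → Ω →ₘ[P] ℝ) (hnrm : IsRNNorm nrm) :
    ∀ l ∈ rdual (fun f : ↥(rdual nrm) => dnorm nrm f.1),
      l ∈ @closure _ (sigmaElTop P ↥(rdual nrm)) (Set.range (Jmap nrm)) := by
  intro l _
  apply GW.mem_closure_ballTop
  rintro ⟨s, ⟨e, he⟩, ⟨lam, hlam0, hlam1⟩⟩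
  obtain ⟨x, hx⟩ := GW.key nrm l s he hlam0 hlam1
  exact ⟨Jmap nrm x, hx, Set.mem_range_self x⟩
end

section
/- Let (E,‖·‖) be a random normed module over ℂ and E_cc its countable concatenation hull with the extended random norm. Then J(E) is dense in J(E_cc) ⊆ E** with respect to the (ε,λ)-topology 𝓣_{ε,λ} on E**; moreover, since 𝓣_{ε,λ} is stronger than σ_{(ε,λ)}(E**,E*), J(E) is σ_{(ε,λ)}(E**,E*)-dense in J(E_cc). -/
open MeasureTheory

namespace RNM

variable {Ω : Type} [MeasurableSpace Ω] {P : Measure Ω}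

lemma indC_ae (A : Set Ω) (hA : MeasurableSet A) :
    ∀ᵐ ω ∂P, (indC (P := P) A hA) ω = A.indicator (fun _ => (1 : ℂ)) ω :=
  AEEqFun.coeFn_mk _ _

lemma indR_ae (A : Set Ω) (hA : MeasurableSet A) :
    ∀ᵐ ω ∂P, (indR (P := P) A hA) ω = A.indicator (fun _ => (1 : ℝ)) ω :=
  AEEqFun.coeFn_mk _ _

lemma sum_ae {ι : Type*} {γ : Type*} [TopologicalSpace γ] [AddCommGroup γ]
    [IsTopologicalAddGroup γ] (s : Finset ι) (f : ι → Ω →ₘ[P] γ) :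
    ∀ᵐ ω ∂P, (∑ i ∈ s, f i) ω = ∑ i ∈ s, (f i) ω := by
  classical
  induction s using Finset.induction with
  | empty => simpa using zero_ae (P := P) γ
  | @insert a s ha ih =>
    rw [Finset.sum_insert ha]
    filter_upwards [add_ae (f a) (∑ i ∈ s, f i), ih] with ω h1 h2
    rw [h1, h2, Finset.sum_insert ha]

lemma indC_biUnion (s : Finset ℕ) {A : ℕ → Set Ω} (hm : ∀ n, MeasurableSet (A n))
    (hd : Pairwise (Function.onFun Disjoint A)) :
    indC (P := P) (⋃ n ∈ s, A n) (s.measurableSet_biUnion (fun n _ => hm n)) =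
      ∑ n ∈ s, indC (P := P) (A n) (hm n) := by
  apply AEEqFun.ext
  filter_upwards [indC_ae (P := P) (⋃ n ∈ s, A n) (s.measurableSet_biUnion (fun n _ => hm n)),
    sum_ae s (fun n => indC (P := P) (A n) (hm n)),
    (Filter.eventually_all_finset s).2 (fun n _ => indC_ae (P := P) (A n) (hm n))]
    with ω h1 h2 h3
  rw [h1, h2, Finset.indicator_biUnion_apply s A (fun i _ j _ hij => hd hij) ω]
  exact (Finset.sum_congr rfl fun n hn => (h3 n hn)).symm

lemma indC_mul_self (A : Set Ω) (hA : MeasurableSet A) :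
    indC (P := P) A hA * indC (P := P) A hA = indC (P := P) A hA := by
  apply AEEqFun.ext
  filter_upwards [mul_ae (indC (P := P) A hA) (indC (P := P) A hA), indC_ae (P := P) A hA]
    with ω h1 h2
  rw [h1, h2]
  by_cases h : ω ∈ A <;>
    simp [Set.indicator_of_mem, Set.indicator_of_notMem, h]

lemma indC_mul_disjoint {A B : Set Ω} (hA : MeasurableSet A) (hB : MeasurableSet B)
    (hd : Disjoint A B) :
    indC (P := P) A hA * indC (P := P) B hB = 0 := by
  apply AEEqFun.ext
  filter_upwards [mul_ae (indC (P := P) A hA) (indC (P := P) B hB), indC_ae (P := P) A hA,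
    indC_ae (P := P) B hB, zero_ae (P := P) ℂ] with ω h1 h2 h3 h4
  rw [h1, h2, h3, h4]
  by_cases h : ω ∈ A
  · rw [Set.indicator_of_notMem (Set.disjoint_left.1 hd h)]; simp
  · rw [Set.indicator_of_notMem h]; simp

lemma indC_add_compl (B : Set Ω) (hB : MeasurableSet B) :
    indC (P := P) B hB + indC (P := P) Bᶜ hB.compl = 1 := by
  apply AEEqFun.ext
  filter_upwards [add_ae (indC (P := P) B hB) (indC (P := P) Bᶜ hB.compl),
    indC_ae (P := P) B hB, indC_ae (P := P) Bᶜ hB.compl, one_ae (P := P) ℂ]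
    with ω h1 h2 h3 h4
  rw [h1, h2, h3, h4]
  by_cases h : ω ∈ B
  · rw [Set.indicator_of_mem h, Set.indicator_of_notMem (by simpa using h)]; ring
  · rw [Set.indicator_of_notMem h, Set.indicator_of_mem (by simpa using h)]; ring

lemma smul_finset_sum {M : Type*} [AddCommGroup M] [Module (Ω →ₘ[P] ℂ) M]
    (c : Ω →ₘ[P] ℂ) {ι : Type*} (s : Finset ι) (f : ι → M) :
    c • ∑ i ∈ s, f i = ∑ i ∈ s, c • f i := by
  classical
  induction s using Finset.induction with
  | empty => simp
  | @insert a s ha ih =>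
    rw [Finset.sum_insert ha, Finset.sum_insert ha]
    exact (smul_add c (f a) (∑ i ∈ s, f i)).trans (by rw [ih])

lemma dnorm_nonpos_on {E : Type*} [AddCommGroup E] [Module (Ω →ₘ[P] ℂ) E]
    (nrm0 : E → Ω →ₘ[P] ℝ) (g : E →ₗ[Ω →ₘ[P] ℂ] (Ω →ₘ[P] ℂ))
    {B : Set Ω} (hB : MeasurableSet B)
    (hg : g = indC (P := P) Bᶜ hB.compl • g) :
    ∀ᵐ ω ∂P, ω ∈ B → (dnorm nrm0 g) ω ≤ 0 := by
  unfold dnorm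
  split_ifs with h
  · have hs : IsLUB {a | ∃ y : E, nrm0 y ≤ 1 ∧ a = L0abs (g y)} h.choose := h.choose_spec
    have hub : h.choose ≤ indR (P := P) Bᶜ hB.compl * h.choose := by
      apply hs.2
      rintro a ⟨y, hy1, rfl⟩
      have hbd : L0abs (g y) ≤ h.choose := hs.1 ⟨y, hy1, rfl⟩
      have e : g y = indC (P := P) Bᶜ hB.compl * g y := by
        conv_lhs => rw [hg]
        rw [LinearMap.smul_apply, smul_eq_mul]
      apply le_of_ae
      filter_upwards [L0abs_ae (g y), mul_ae (indC (P := P) Bᶜ hB.compl) (g y),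
        mul_ae (indR (P := P) Bᶜ hB.compl) h.choose, indC_ae (P := P) Bᶜ hB.compl,
        indR_ae (P := P) Bᶜ hB.compl, le_ae hbd] with ω h1 h2 h3 h4 h5 h6
      rw [h1, h3, h5]
      have e2 : (g y) ω = Bᶜ.indicator (fun _ => (1 : ℂ)) ω * (g y) ω := by
        conv_lhs => rw [e]
        rw [h2, h4]
      by_cases hω : ω ∈ Bᶜ
      · rw [Set.indicator_of_mem hω, one_mul]
        rw [h1] at h6
        exact h6
      · rw [Set.indicator_of_notMem hω, zero_mul] at e2
        rw [Set.indicator_of_notMem hω, zero_mul, e2]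
        simp
    filter_upwards [le_ae hub, mul_ae (indR (P := P) Bᶜ hB.compl) h.choose,
      indR_ae (P := P) Bᶜ hB.compl] with ω h1 h2 h3 hωB
    rw [h2, h3, Set.indicator_of_notMem (by simpa using hωB), zero_mul] at h1
    exact h1
  · filter_upwards [zero_ae (P := P) ℝ] with ω h _
    rw [h]

lemma approx_mem {F : Type*} [AddCommGroup F] [Module (Ω →ₘ[P] ℂ) F]
    [IsProbabilityMeasure P]
    (S : Submodule (Ω →ₘ[P] ℂ) F) (hHull : Hcc (P := P) (S : Set F) = Set.univ)
    (x : F) {l : ℝ} (hl : 0 < l) :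
    ∃ y ∈ S, ∃ (B : Set Ω) (hB : MeasurableSet B),
      ENNReal.ofReal (1 - l) < P B ∧
      y - x = indC (P := P) Bᶜ hB.compl • (y - x) := by
  have hx : x ∈ Hcc (P := P) (S : Set F) := by rw [hHull]; trivial
  obtain ⟨A, hA, m, hmS, hxm⟩ := hx
  have hcov : P (⋃ n, A n) = 1 := by rw [hA.cover]; exact measure_univ
  have hlt1 : ENNReal.ofReal (1 - l) < 1 := ENNReal.ofReal_lt_one.2 (by linarith)
  have htend : Filter.Tendsto (fun N => P (Set.accumulate A N)) Filter.atTop (nhds 1) := by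
    have := MeasureTheory.tendsto_measure_iUnion_accumulate (μ := P) (f := A)
    rwa [hcov] at this
  obtain ⟨N, hN⟩ := (htend.eventually_const_lt hlt1).exists
  have hBeq : Set.accumulate A N = ⋃ n ∈ Finset.range (N + 1), A n := by
    ext ω
    simp [Set.accumulate_def, Nat.lt_succ_iff]
  set y : F := ∑ n ∈ Finset.range (N + 1), indC (P := P) (A n) (hA.meas n) • m n with hy_def
  refine ⟨y, Submodule.sum_mem S (fun n _ => Submodule.smul_mem S _ (hmS n)),
    ⋃ n ∈ Finset.range (N + 1), A n,
    (Finset.range (N + 1)).measurableSet_biUnion (fun n _ => hA.meas n), ?_, ?_⟩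
  · rwa [hBeq] at hN
  · have hzero : ∀ n ∈ Finset.range (N + 1),
        indC (P := P) (A n) (hA.meas n) • (y - x) = 0 := by
      intro n _
      have h1 : indC (P := P) (A n) (hA.meas n) • y = indC (P := P) (A n) (hA.meas n) • m n := by
        rw [hy_def, smul_finset_sum, Finset.sum_eq_single n]
        · rw [smul_smul, indC_mul_self]
        · intro k hk hkn
          rw [smul_smul, indC_mul_disjoint (hA.meas n) (hA.meas k) (hA.disj (Ne.symm hkn))]
          exact zero_smul (Ω →ₘ[P] ℂ) (m k)
        · intro hn'
          exact absurd (by assumption) hn'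
      rw [smul_sub, h1, hxm n, sub_self]
    have hBzero : indC (P := P) (⋃ n ∈ Finset.range (N + 1), A n)
        ((Finset.range (N + 1)).measurableSet_biUnion (fun n _ => hA.meas n)) • (y - x) = 0 := by
      rw [indC_biUnion (Finset.range (N + 1)) hA.meas hA.disj, Finset.sum_smul]
      exact Finset.sum_eq_zero hzero
    calc y - x = (1 : Ω →ₘ[P] ℂ) • (y - x) := (one_smul _ _).symm
      _ = (indC (P := P) (⋃ n ∈ Finset.range (N + 1), A n)
            ((Finset.range (N + 1)).measurableSet_biUnion (fun n _ => hA.meas n)) +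
          indC (P := P) (⋃ n ∈ Finset.range (N + 1), A n)ᶜ
            ((Finset.range (N + 1)).measurableSet_biUnion (fun n _ => hA.meas n)).compl) •
            (y - x) := by rw [indC_add_compl]
      _ = _ • (y - x) + _ • (y - x) := add_smul _ _ _
      _ = indC (P := P) (⋃ n ∈ Finset.range (N + 1), A n)ᶜ
            ((Finset.range (N + 1)).measurableSet_biUnion (fun n _ => hA.meas n)).compl •
            (y - x) := by rw [hBzero, zero_add]

lemma mem_closure_TelTop {E : Type*} [AddCommGroup E] [Module (Ω →ₘ[P] ℂ) E]
    (nrm0 : E → Ω →ₘ[P] ℝ) (T : Set E) (x : E)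
    (h : ∀ e : ℝ, 0 < e → ∀ l : ℝ, 0 < l → l < 1 →
      ∃ y ∈ T, ENNReal.ofReal (1 - l) < P {ω | (nrm0 (y - x)) ω < e}) :
    x ∈ @closure _ (TelTop nrm0) T := by
  letI := TelTop (P := P) nrm0
  rw [mem_closure_iff]
  intro U hU hxU
  obtain ⟨⟨⟨e, he⟩, ⟨l, hl⟩⟩, hball⟩ := hU x hxU
  obtain ⟨y, hyT, hy⟩ := h e he l hl.1 hl.2
  exact ⟨y, hball hy, hyT⟩

lemma mem_closure_sigmaElTop {M : Type*} [AddCommGroup M] [Module (Ω →ₘ[P] ℂ) M]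
    (T : Set (M →ₗ[Ω →ₘ[P] ℂ] (Ω →ₘ[P] ℂ))) (g : M →ₗ[Ω →ₘ[P] ℂ] (Ω →ₘ[P] ℂ))
    (h : ∀ s : Finset M, ∀ e : ℝ, 0 < e → ∀ l : ℝ, 0 < l → l < 1 →
      ∃ y ∈ T, ∀ x ∈ s,
        ENNReal.ofReal (1 - l) < P {ω | (L0abs (y x - g x)) ω < e}) :
    g ∈ @closure _ (sigmaElTop P M) T := by
  letI := sigmaElTop P M
  rw [mem_closure_iff]
  intro U hU hxU
  obtain ⟨⟨s, ⟨e, he⟩, ⟨l, hl⟩⟩, hball⟩ := hU g hxU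
  obtain ⟨y, hyT, hy⟩ := h s e he l hl.1 hl.2
  exact ⟨y, hball hy, hyT⟩

end RNM


open MeasureTheory RNM in
/-- If `F` is the countable concatenation hull of its submodule `S` (every element of `F`
is a concatenation of elements of `S`), then `J(S)` is dense in `J(F)` inside `F**` for
the `(ε,λ)`-topology `𝓣_{ε,λ}` on `F**`, hence also for the (coarser) `(ε,λ)` weak star
topology `σ_{(ε,λ)}(F**,F*)`. -/
theorem J_image_dense_in_hull_image {Ω : Type} [MeasurableSpace Ω] {P : Measure Ω}
    [IsProbabilityMeasure P] {F : Type*} [AddCommGroup F] [Module (Ω →ₘ[P] ℂ) F]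
    (nrm : F → Ω →ₘ[P] ℝ) (hnrm : IsRNNorm nrm)
    (S : Submodule (Ω →ₘ[P] ℂ) F) (hHull : Hcc (P := P) (S : Set F) = Set.univ) :
    Set.range (Jmap nrm) ⊆
      @closure _ (TelTop (dnorm (fun f : ↥(rdual nrm) => dnorm nrm f.1)))
        (Jmap nrm '' (S : Set F)) ∧
    Set.range (Jmap nrm) ⊆
      @closure _ (sigmaElTop P ↥(rdual nrm)) (Jmap nrm '' (S : Set F)) := by
  constructor
  · rintro _ ⟨x, rfl⟩
    apply mem_closure_TelTop
    intro e he l hl0 hl1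
    obtain ⟨y, hyS, B, hB, hPB, hyx⟩ := approx_mem S hHull x hl0
    refine ⟨Jmap nrm y, ⟨y, hyS, rfl⟩, ?_⟩
    have hJ : Jmap nrm y - Jmap nrm x = Jmap nrm (y - x) := by
      refine LinearMap.ext fun f => ?_
      show f.1 y - f.1 x = f.1 (y - x)
      exact (map_sub f.1 y x).symm
    have hJg : Jmap nrm (y - x) =
        indC (P := P) Bᶜ hB.compl • Jmap nrm (y - x) := by
      refine LinearMap.ext fun f => ?_
      show f.1 (y - x) = indC (P := P) Bᶜ hB.compl * f.1 (y - x)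
      conv_lhs => rw [hyx]
      rw [_root_.map_smul, smul_eq_mul]
    have hae := dnorm_nonpos_on (fun f : ↥(rdual nrm) => dnorm nrm f.1)
      (Jmap nrm (y - x)) hB hJg
    rw [hJ]
    refine lt_of_lt_of_le hPB (measure_mono_ae ?_)
    filter_upwards [hae] with ω h hωB
    exact lt_of_le_of_lt (h hωB) he
  · rintro _ ⟨x, rfl⟩
    apply mem_closure_sigmaElTop
    intro s e he l hl0 hl1
    obtain ⟨y, hyS, B, hB, hPB, hyx⟩ := approx_mem S hHull x hl0
    refine ⟨Jmap nrm y, ⟨y, hyS, rfl⟩, fun f _ => ?_⟩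
    have hval : Jmap nrm y f - Jmap nrm x f =
        indC (P := P) Bᶜ hB.compl * (f.1 (y - x)) := by
      show f.1 y - f.1 x = _
      rw [← map_sub]
      conv_lhs => rw [hyx]
      rw [_root_.map_smul, smul_eq_mul]
    rw [hval]
    refine lt_of_lt_of_le hPB (measure_mono_ae ?_)
    filter_upwards [L0abs_ae (indC (P := P) Bᶜ hB.compl * f.1 (y - x)),
      mul_ae (indC (P := P) Bᶜ hB.compl) (f.1 (y - x)), indC_ae (P := P) Bᶜ hB.compl]
      with ω h1 h2 h3 hωB
    show (L0abs (indC (P := P) Bᶜ hB.compl * f.1 (y - x))) ω < e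
    rw [h1, h2, h3, Set.indicator_of_notMem (show ω ∉ Bᶜ from fun h => h hωB), zero_mul]
    simpa using he
end

section
/- Let (Ω,𝓕,P) be a probability space, n ≥ 1, and let T(E) ⊆ L⁰(𝓕,ℂⁿ) be a proper L⁰(𝓕,ℂ)-submodule with the countable concatenation property. Then there exists a nonzero z ∈ L⁰(𝓕,ℂⁿ) with ⟨w, z⟩ = 0 for all w ∈ T(E). Consequently, if f₁,…,fₙ ∈ E* are L⁰(𝓕,ℂ)-independent functionals on an RN module E with the countable concatenation property, then the map T : E → L⁰(𝓕,ℂⁿ), Tx = (f₁(x),…,fₙ(x)), is surjective. -/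
open MeasureTheory

namespace OrthoProof
open MeasureTheory RNM Finset
open scoped ENNReal NNReal

variable {Ω : Type} [MeasurableSpace Ω] {P : Measure Ω}

lemma conjC_ae (ξ : Ω →ₘ[P] ℂ) : ∀ᵐ ω ∂P, conjC ξ ω = (starRingEnd ℂ) (ξ ω) :=
  AEEqFun.coeFn_comp _ _ ξ

lemma sum_ae {ι : Type*} (s : Finset ι) (F : ι → Ω →ₘ[P] ℂ) :
    ∀ᵐ ω ∂P, (∑ i ∈ s, F i) ω = ∑ i ∈ s, F i ω := by
  classical
  induction s using Finset.induction_on with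
  | empty => simpa using zero_ae (P := P) ℂ
  | insert a s hx ih =>
    rw [Finset.sum_insert hx]
    filter_upwards [add_ae (F a) (∑ i ∈ s, F i), ih] with ω h1 h2
    rw [h1, h2, Finset.sum_insert hx]

/-- the `L⁰` dot product `∑ i, v i * conj (u i)`. -/
noncomputable def dotR {n : ℕ} (v u : Fin n → Ω →ₘ[P] ℂ) : Ω →ₘ[P] ℂ :=
  ∑ i, v i * conjC (u i)

lemma dotR_ae {n : ℕ} (v u : Fin n → Ω →ₘ[P] ℂ) :
    ∀ᵐ ω ∂P, dotR v u ω = ∑ i, v i ω * (starRingEnd ℂ) (u i ω) := by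
  have h1 : ∀ᵐ ω ∂P, ∀ i, (v i * conjC (u i)) ω = v i ω * (starRingEnd ℂ) (u i ω) := by
    rw [ae_all_iff]
    intro i
    filter_upwards [mul_ae (v i) (conjC (u i)), conjC_ae (u i)] with ω h1 h2
    rw [h1, h2]
  filter_upwards [sum_ae Finset.univ (fun i => v i * conjC (u i)), h1] with ω h1 h2
  rw [dotR, h1]
  exact Finset.sum_congr rfl fun i _ => h2 i

lemma smul_comp_apply {n : ℕ} (c : Ω →ₘ[P] ℂ) (v : Fin n → Ω →ₘ[P] ℂ) (i : Fin n) :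
    (c • v) i = c * v i := rfl

/-- the residual of `w` after subtracting projections onto `g 0, …, g (k-1)`. -/
noncomputable def resV {n : ℕ} (g : ℕ → Fin n → Ω →ₘ[P] ℂ) (k : ℕ)
    (w : Fin n → Ω →ₘ[P] ℂ) : Fin n → Ω →ₘ[P] ℂ :=
  w - ∑ i ∈ Finset.range k, dotR w (g i) • g i

lemma resV_mem {n : ℕ} {W : Submodule (Ω →ₘ[P] ℂ) (Fin n → Ω →ₘ[P] ℂ)}
    {g : ℕ → Fin n → Ω →ₘ[P] ℂ} (hg : ∀ i, g i ∈ W) (k : ℕ)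
    {w : Fin n → Ω →ₘ[P] ℂ} (hw : w ∈ W) : resV g k w ∈ W :=
  sub_mem hw (Submodule.sum_mem _ fun i _ => Submodule.smul_mem _ _ (hg i))

lemma resV_ae {n : ℕ} (g : ℕ → Fin n → Ω →ₘ[P] ℂ) (k : ℕ) (w : Fin n → Ω →ₘ[P] ℂ) :
    ∀ᵐ ω ∂P, ∀ a, resV g k w a ω =
      w a ω - ∑ i ∈ Finset.range k,
        (∑ b, w b ω * (starRingEnd ℂ) (g i b ω)) * g i a ω := by
  rw [ae_all_iff]
  intro a
  have e1 : resV g k w a = w a - ∑ i ∈ Finset.range k, dotR w (g i) * g i a := by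
    simp only [resV, Pi.sub_apply]
    congr 1
    rw [Finset.sum_apply]
    exact Finset.sum_congr rfl fun i _ => rfl
  have h2 : ∀ᵐ ω ∂P, ∀ i, (dotR w (g i) * g i a) ω =
      (∑ b, w b ω * (starRingEnd ℂ) (g i b ω)) * g i a ω := by
    rw [ae_all_iff]
    intro i
    filter_upwards [mul_ae (dotR w (g i)) (g i a), dotR_ae w (g i)] with ω h1 h2
    rw [h1, h2]
  filter_upwards [sub_ae (w a) (∑ i ∈ Finset.range k, dotR w (g i) * g i a),
    sum_ae (Finset.range k) (fun i => dotR w (g i) * g i a), h2] with ω h1 h2 h3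
  rw [e1, h1, h2]
  congr 1
  exact Finset.sum_congr rfl fun i _ => h3 i

lemma suppSet_measurable {n : ℕ} (v : Fin n → Ω →ₘ[P] ℂ) :
    MeasurableSet {ω | ∃ a, v a ω ≠ 0} := by
  have : {ω | ∃ a, v a ω ≠ 0} = ⋃ a, (v a) ⁻¹' {0}ᶜ := by
    ext ω; simp [Set.mem_iUnion]
  rw [this]
  exact MeasurableSet.iUnion fun a =>
    (v a).stronglyMeasurable.measurable (MeasurableSet.compl (measurableSet_singleton 0))

/-- countable exhaustion of an arbitrary family of measurable sets. -/
lemma exists_countable_sup {ι : Type*} [Nonempty ι] [IsProbabilityMeasure P]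
    (S : ι → Set Ω) (hS : ∀ i, MeasurableSet (S i)) :
    ∃ u : ℕ → ι, ∀ i, P (S i \ ⋃ m, S (u m)) = 0 := by
  classical
  set c := ⨆ t : Finset ι, P (⋃ i ∈ t, S i) with hc
  have hctop : c ≠ ⊤ :=
    ne_top_of_le_ne_top ENNReal.one_ne_top (iSup_le fun t => prob_le_one)
  have hlt : ∀ m : ℕ, ∃ t : Finset ι, c - ((m : ℝ≥0∞) + 1)⁻¹ ≤ P (⋃ i ∈ t, S i) := by
    intro m
    by_cases h0 : c = 0
    · exact ⟨∅, by rw [h0, zero_tsub]; exact zero_le⟩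
    · have hne : ((m : ℝ≥0∞) + 1)⁻¹ ≠ 0 :=
        ENNReal.inv_ne_zero.mpr
          (ENNReal.add_ne_top.2 ⟨ENNReal.natCast_ne_top m, ENNReal.one_ne_top⟩)
      have := ENNReal.sub_lt_self hctop h0 hne
      obtain ⟨t, ht⟩ := lt_iSup_iff.mp (hc ▸ this)
      exact ⟨t, ht.le⟩
  choose t ht using hlt
  set u : ℕ → ι := fun k =>
    ((t (Nat.pairEquiv.symm k).1).toList.getD (Nat.pairEquiv.symm k).2
      (Classical.arbitrary ι)) with hu
  refine ⟨u, fun i => ?_⟩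
  set U := ⋃ m, S (u m) with hU
  have hUmeas : MeasurableSet U := MeasurableSet.iUnion fun m => hS (u m)
  have hsub : ∀ m, (⋃ j ∈ t m, S j) ⊆ U := by
    intro m ω hω
    rw [hU, Set.mem_iUnion]
    simp only [Set.mem_iUnion] at hω
    obtain ⟨j, hj, hωj⟩ := hω
    have hjl : j ∈ (t m).toList := Finset.mem_toList.2 hj
    obtain ⟨p, hp, hpj⟩ := List.getElem_of_mem hjl
    refine ⟨Nat.pairEquiv (m, p), ?_⟩
    have hup : u (Nat.pairEquiv (m, p)) = j := by
      rw [hu]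
      simp only [Equiv.symm_apply_apply]
      rw [List.getD_eq_getElem _ _ hp, hpj]
    rw [hup]
    exact hωj
  have hUc : c ≤ P U := by
    apply ENNReal.le_of_forall_pos_le_add
    intro ε hε _
    have hεne : (ε : ℝ≥0∞) ≠ 0 := by
      simpa using hε.ne'
    obtain ⟨m, hm⟩ := ENNReal.exists_inv_nat_lt hεne
    have h1 : c - ((m : ℝ≥0∞) + 1)⁻¹ ≤ P U :=
      le_trans (ht m) (le_trans (measure_mono (hsub m)) le_rfl)
    have h2 : ((m : ℝ≥0∞) + 1)⁻¹ ≤ (ε : ℝ≥0∞) :=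
      le_trans (ENNReal.inv_le_inv.2 (le_add_of_nonneg_right zero_le_one)) hm.le
    calc c ≤ P U + ((m : ℝ≥0∞) + 1)⁻¹ := tsub_le_iff_right.mp h1
      _ ≤ P U + ε := add_le_add le_rfl h2
  have hWseq : Monotone (fun m => (⋃ k ∈ Finset.range (m + 1), S (u k)) ∪ S i) := by
    intro m m' hmm
    apply Set.union_subset_union_left
    exact Set.biUnion_subset_biUnion_left (Finset.range_subset_range.2 (by omega))
  have hD : U ∪ S i = ⋃ m, ((⋃ k ∈ Finset.range (m + 1), S (u k)) ∪ S i) := by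
    ext ω
    simp only [hU, Set.mem_union, Set.mem_iUnion, Finset.mem_range, exists_prop]
    constructor
    · rintro (⟨m, hm⟩ | hm)
      · exact ⟨m, Or.inl ⟨m, by omega, hm⟩⟩
      · exact ⟨0, Or.inr hm⟩
    · rintro ⟨m, ⟨k, _, hk⟩ | hm⟩
      · exact Or.inl ⟨k, hk⟩
      · exact Or.inr hm
  have h1 : P (U ∪ S i) ≤ c := by
    rw [hD, Directed.measure_iUnion hWseq.directed_le]
    apply iSup_le
    intro m
    have he : (⋃ k ∈ Finset.range (m + 1), S (u k)) ∪ S i =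
        ⋃ j ∈ ((Finset.range (m + 1)).image u ∪ {i}), S j := by
      ext ω
      simp only [Set.mem_union, Set.mem_iUnion, Finset.mem_union, Finset.mem_image,
        Finset.mem_singleton, Finset.mem_range]
      constructor
      · rintro (⟨k, hk, hω⟩ | hω)
        · exact ⟨u k, Or.inl ⟨k, hk, rfl⟩, hω⟩
        · exact ⟨i, Or.inr rfl, hω⟩
      · rintro ⟨j, ⟨k, hk, rfl⟩ | rfl, hω⟩
        · exact Or.inl ⟨k, hk, hω⟩
        · exact Or.inr hω
    rw [he]
    exact le_iSup (fun t : Finset ι => P (⋃ i ∈ t, S i)) _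
  have h2 : P (U ∪ S i) = P U + P (S i \ U) := by
    rw [← Set.union_diff_self]
    exact measure_union disjoint_sdiff_self_right ((hS i).diff hUmeas)
  have h3 : P U + P (S i \ U) ≤ P U + 0 := by
    rw [add_zero]
    exact le_trans (h2 ▸ h1) hUc
  exact le_zero_iff.mp ((ENNReal.add_le_add_iff_left (measure_ne_top P U)).mp h3)

/-- glue countably many elements of `W` along supports, using the CCP. -/
lemma ccp_glue {n : ℕ} {W : Submodule (Ω →ₘ[P] ℂ) (Fin n → Ω →ₘ[P] ℂ)}
    (hW : SetCCP (P := P) (W : Set (Fin n → Ω →ₘ[P] ℂ)))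
    (S : ℕ → Set Ω) (hS : ∀ m, MeasurableSet (S m))
    (u : ℕ → Fin n → Ω →ₘ[P] ℂ) (hu : ∀ m, u m ∈ W) :
    ∃ g ∈ W, ∀ᵐ ω ∂P, (ω ∉ (⋃ m, S m) → ∀ j, g j ω = 0) ∧
      ∀ m, ω ∈ S m \ (⋃ l, ⋃ (_ : l < m), S l) → ∀ j, g j ω = u m j ω := by
  classical
  set A : ℕ → Set Ω := fun k => match k with
    | 0 => (⋃ m, S m)ᶜ
    | m + 1 => S m \ (⋃ l, ⋃ (_ : l < m), S l) with hA
  have hAmeas : ∀ k, MeasurableSet (A k) := by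
    intro k
    match k with
    | 0 => exact (MeasurableSet.iUnion fun m => hS m).compl
    | m + 1 =>
      exact (hS m).diff (MeasurableSet.iUnion fun l => MeasurableSet.iUnion fun _ => hS l)
  have hsub : ∀ m, A (m + 1) ⊆ S m := fun m => Set.diff_subset
  have hd0 : ∀ l : ℕ, Disjoint (A 0) (A (l + 1)) := by
    intro l
    refine Set.disjoint_left.2 fun ω h0 hl => h0 (Set.mem_iUnion.2 ⟨l, hsub l hl⟩)
  have hdS : ∀ m l : ℕ, m < l → Disjoint (A (m + 1)) (A (l + 1)) := by
    intro m l hml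
    refine Set.disjoint_left.2 fun ω hm hl => ?_
    exact hl.2 (Set.mem_iUnion.2 ⟨m, Set.mem_iUnion.2 ⟨hml, hm.1⟩⟩)
  have hpart : IsMPartition A := by
    refine ⟨hAmeas, ?_, ?_⟩
    · intro k l hkl
      match k, l with
      | 0, 0 => exact absurd rfl hkl
      | 0, l + 1 => exact hd0 l
      | k + 1, 0 => exact (hd0 k).symm
      | k + 1, l + 1 =>
        rcases lt_or_gt_of_ne (fun h : k = l => hkl (by rw [h])) with h | h
        · exact hdS k l h
        · exact (hdS l k h).symm
    · ext ω
      simp only [Set.mem_iUnion, Set.mem_univ, iff_true]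
      by_cases h : ∃ m, ω ∈ S m
      · refine ⟨Nat.find h + 1, Nat.find_spec h, ?_⟩
        intro hc
        obtain ⟨l, hl⟩ := Set.mem_iUnion.1 hc
        obtain ⟨hll, hlS⟩ := Set.mem_iUnion.1 hl
        exact Nat.find_min h hll hlS
      · exact ⟨0, fun hc => h (Set.mem_iUnion.1 hc)⟩
  set x : ℕ → (Fin n → Ω →ₘ[P] ℂ) := fun k => match k with
    | 0 => 0
    | m + 1 => u m with hx
  have hxW : ∀ k, x k ∈ W := by
    intro k
    match k with
    | 0 => exact W.zero_mem
    | m + 1 => exact hu m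
  obtain ⟨g, hgW, hg⟩ := hW A hpart x hxW
  refine ⟨g, hgW, ?_⟩
  have hpt : ∀ᵐ ω ∂P, ∀ k, ∀ j : Fin n, ω ∈ A k → g j ω = x k j ω := by
    rw [ae_all_iff]
    intro k
    rw [ae_all_iff]
    intro j
    have he : indC (P := P) (A k) (hAmeas k) * g j =
        indC (P := P) (A k) (hAmeas k) * x k j := congrFun (hg k) j
    filter_upwards [mul_ae (indC (P := P) (A k) (hAmeas k)) (g j),
      mul_ae (indC (P := P) (A k) (hAmeas k)) (x k j),
      AEEqFun.coeFn_mk ((A k).indicator fun _ => (1 : ℂ))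
        (aestronglyMeasurable_const.indicator (hAmeas k))] with ω h1 h2 h3
    intro hmem
    have hv : (indC (P := P) (A k) (hAmeas k) * g j) ω =
        (indC (P := P) (A k) (hAmeas k) * x k j) ω := by rw [he]
    rw [h1, h2] at hv
    have hind : indC (P := P) (A k) (hAmeas k) ω = 1 := by
      have h3' : indC (P := P) (A k) (hAmeas k) ω =
          (A k).indicator (fun _ => (1 : ℂ)) ω := h3
      rw [h3', Set.indicator_of_mem hmem]
    rw [hind, one_mul, one_mul] at hv
    exact hv
  have hzero : ∀ᵐ ω ∂P, ∀ j : Fin n, (0 : Fin n → Ω →ₘ[P] ℂ) j ω = 0 := by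
    rw [ae_all_iff]
    intro j
    exact zero_ae (P := P) ℂ
  filter_upwards [hpt, hzero] with ω h1 h2
  constructor
  · intro hns j
    have hA0 : ω ∈ A 0 := hns
    have := h1 0 j hA0
    rw [this]
    exact h2 j
  · intro m hm j
    exact h1 (m + 1) j hm

/-- the pointwise normalizing scalar `(∑ b, |r b|²)^{-1/2}`. -/
noncomputable def nrmInv {n : ℕ} (r : Fin n → Ω →ₘ[P] ℂ) : Ω →ₘ[P] ℂ :=
  AEEqFun.mk (fun ω => (((Real.sqrt (∑ b, Complex.normSq (r b ω)))⁻¹ : ℝ) : ℂ))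
    (Measurable.aestronglyMeasurable (by
      have hsum : Measurable fun ω => ∑ b, Complex.normSq (r b ω) :=
        Finset.measurable_sum Finset.univ fun b _ =>
          Complex.continuous_normSq.measurable.comp (r b).stronglyMeasurable.measurable
      have h2 : Measurable fun ω => (Real.sqrt (∑ b, Complex.normSq (r b ω)))⁻¹ :=
        (Real.continuous_sqrt.measurable.comp hsum).inv
      exact Complex.measurable_ofReal.comp h2))

lemma nrmInv_ae {n : ℕ} (r : Fin n → Ω →ₘ[P] ℂ) :
    ∀ᵐ ω ∂P, nrmInv r ω = (((Real.sqrt (∑ b, Complex.normSq (r b ω)))⁻¹ : ℝ) : ℂ) :=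
  AEEqFun.coeFn_mk _ _

/-- normalization of a vector in `L⁰(𝓕,ℂⁿ)`. -/
noncomputable def normz {n : ℕ} (r : Fin n → Ω →ₘ[P] ℂ) : Fin n → Ω →ₘ[P] ℂ :=
  nrmInv r • r

lemma normz_mem {n : ℕ} {W : Submodule (Ω →ₘ[P] ℂ) (Fin n → Ω →ₘ[P] ℂ)}
    {r : Fin n → Ω →ₘ[P] ℂ} (hr : r ∈ W) : normz r ∈ W :=
  Submodule.smul_mem _ _ hr

lemma normz_ae {n : ℕ} (r : Fin n → Ω →ₘ[P] ℂ) :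
    ∀ᵐ ω ∂P, ∀ a, normz r a ω =
      (((Real.sqrt (∑ b, Complex.normSq (r b ω)))⁻¹ : ℝ) : ℂ) * r a ω := by
  rw [ae_all_iff]
  intro a
  have : normz r a = nrmInv r * r a := rfl
  filter_upwards [mul_ae (nrmInv r) (r a), nrmInv_ae r] with ω h1 h2
  rw [this, h1, h2]

/-- the invariant carried through the Gram–Schmidt-style construction. -/
def Inv {n : ℕ} (W : Submodule (Ω →ₘ[P] ℂ) (Fin n → Ω →ₘ[P] ℂ)) (k : ℕ)
    (g : ℕ → Fin n → Ω →ₘ[P] ℂ) : Prop :=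
  (∀ i, g i ∈ W) ∧
  (∀ i, i < k → ∀ j, j < k → i ≠ j →
    ∀ᵐ ω ∂P, ∑ a, g i a ω * (starRingEnd ℂ) (g j a ω) = 0) ∧
  (∀ i, i < k → ∀ᵐ ω ∂P, (∑ a, Complex.normSq (g i a ω)) = 0 ∨
    (∑ a, Complex.normSq (g i a ω)) = 1) ∧
  (∀ i j, i ≤ j → j < k → ∀ᵐ ω ∂P, (∃ a, g j a ω ≠ 0) → (∃ a, g i a ω ≠ 0)) ∧
  (∀ w, w ∈ W → ∀ᵐ ω ∂P,
    (∃ a, resV g k w a ω ≠ 0) → ∀ i, i < k → ∃ a, g i a ω ≠ 0)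

lemma res_orth {n k : ℕ} {g : ℕ → Fin n → Ω →ₘ[P] ℂ}
    (h2 : ∀ i, i < k → ∀ j, j < k → i ≠ j →
      ∀ᵐ ω ∂P, ∑ a, g i a ω * (starRingEnd ℂ) (g j a ω) = 0)
    (h3 : ∀ i, i < k → ∀ᵐ ω ∂P, (∑ a, Complex.normSq (g i a ω)) = 0 ∨
      (∑ a, Complex.normSq (g i a ω)) = 1)
    (w : Fin n → Ω →ₘ[P] ℂ) {i : ℕ} (hi : i < k) :
    ∀ᵐ ω ∂P, ∑ a, resV g k w a ω * (starRingEnd ℂ) (g i a ω) = 0 := by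
  have h2' : ∀ᵐ ω ∂P, ∀ l, l < k → l ≠ i →
      ∑ a, g l a ω * (starRingEnd ℂ) (g i a ω) = 0 := by
    rw [ae_all_iff]
    intro l
    by_cases hl : l < k ∧ l ≠ i
    · filter_upwards [h2 l hl.1 i hi hl.2] with ω h _ _
      exact h
    · filter_upwards with ω hlk hli
      exact absurd ⟨hlk, hli⟩ hl
  filter_upwards [resV_ae g k w, h3 i hi, h2'] with ω hres hnrm horth
  have step1 : ∑ a, resV g k w a ω * (starRingEnd ℂ) (g i a ω) =
      (∑ b, w b ω * (starRingEnd ℂ) (g i b ω)) -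
      ∑ l ∈ Finset.range k, (∑ b, w b ω * (starRingEnd ℂ) (g l b ω)) *
        ∑ a, g l a ω * (starRingEnd ℂ) (g i a ω) := by
    have e0 : ∑ a, resV g k w a ω * (starRingEnd ℂ) (g i a ω) =
        ∑ a, (w a ω - ∑ l ∈ Finset.range k,
          (∑ b, w b ω * (starRingEnd ℂ) (g l b ω)) * g l a ω) *
          (starRingEnd ℂ) (g i a ω) :=
      Finset.sum_congr rfl fun a _ => by rw [hres a]
    rw [e0]
    rw [show (∑ a, (w a ω - ∑ l ∈ Finset.range k,
          (∑ b, w b ω * (starRingEnd ℂ) (g l b ω)) * g l a ω) *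
          (starRingEnd ℂ) (g i a ω)) =
        ∑ a, (w a ω * (starRingEnd ℂ) (g i a ω) -
          (∑ l ∈ Finset.range k,
            (∑ b, w b ω * (starRingEnd ℂ) (g l b ω)) * g l a ω) *
          (starRingEnd ℂ) (g i a ω)) from
      Finset.sum_congr rfl fun a _ => sub_mul _ _ _]
    rw [Finset.sum_sub_distrib]
    congr 1
    calc ∑ a, (∑ l ∈ Finset.range k,
            (∑ b, w b ω * (starRingEnd ℂ) (g l b ω)) * g l a ω) *
            (starRingEnd ℂ) (g i a ω)
        = ∑ a, ∑ l ∈ Finset.range k,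
            (∑ b, w b ω * (starRingEnd ℂ) (g l b ω)) * g l a ω *
            (starRingEnd ℂ) (g i a ω) :=
          Finset.sum_congr rfl fun a _ => Finset.sum_mul _ _ _
      _ = ∑ l ∈ Finset.range k, ∑ a,
            (∑ b, w b ω * (starRingEnd ℂ) (g l b ω)) * g l a ω *
            (starRingEnd ℂ) (g i a ω) := Finset.sum_comm
      _ = ∑ l ∈ Finset.range k, (∑ b, w b ω * (starRingEnd ℂ) (g l b ω)) *
            ∑ a, g l a ω * (starRingEnd ℂ) (g i a ω) := by
          refine Finset.sum_congr rfl fun l _ => ?_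
          rw [Finset.mul_sum]
          exact Finset.sum_congr rfl fun a _ => mul_assoc _ _ _
  have step2 : ∑ l ∈ Finset.range k, (∑ b, w b ω * (starRingEnd ℂ) (g l b ω)) *
      ∑ a, g l a ω * (starRingEnd ℂ) (g i a ω) =
      (∑ b, w b ω * (starRingEnd ℂ) (g i b ω)) *
      ∑ a, g i a ω * (starRingEnd ℂ) (g i a ω) := by
    refine Finset.sum_eq_single_of_mem i (Finset.mem_range.2 hi) fun l hl hli => ?_
    rw [horth l (Finset.mem_range.1 hl) hli, mul_zero]
  rw [step1, step2]
  have hQ : ∑ a, g i a ω * (starRingEnd ℂ) (g i a ω) =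
      ((∑ a, Complex.normSq (g i a ω) : ℝ) : ℂ) := by
    push_cast
    exact Finset.sum_congr rfl fun a _ => Complex.mul_conj _
  rcases hnrm with h | h
  · have hz : ∀ a, g i a ω = 0 := fun a =>
      Complex.normSq_eq_zero.1
        ((Finset.sum_eq_zero_iff_of_nonneg fun b _ => Complex.normSq_nonneg _).1 h a
          (Finset.mem_univ a))
    have hC : (∑ b, w b ω * (starRingEnd ℂ) (g i b ω)) = 0 :=
      Finset.sum_eq_zero fun b _ => by rw [hz b, map_zero, mul_zero]
    rw [hC, zero_mul, zero_sub, neg_zero]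
  · rw [hQ, h]
    norm_num

lemma inv_step [IsProbabilityMeasure P] {n : ℕ}
    {W : Submodule (Ω →ₘ[P] ℂ) (Fin n → Ω →ₘ[P] ℂ)}
    (hW : SetCCP (P := P) (W : Set (Fin n → Ω →ₘ[P] ℂ)))
    {k : ℕ} {g : ℕ → Fin n → Ω →ₘ[P] ℂ} (h : Inv W k g) :
    ∃ g', (∀ i, i < k → g' i = g i) ∧ Inv W (k + 1) g' := by
  classical
  obtain ⟨h1, h2, h3, h4, h5⟩ := h
  haveI : Nonempty ↥W := ⟨⟨0, W.zero_mem⟩⟩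
  set S : ↥W → Set Ω := fun w => {ω | ∃ a, resV g k w.1 a ω ≠ 0} with hSdef
  obtain ⟨u, hu⟩ := exists_countable_sup (P := P) S (fun w => suppSet_measurable _)
  set v : ℕ → Fin n → Ω →ₘ[P] ℂ := fun m => normz (resV g k (u m).1) with hvdef
  have hvW : ∀ m, v m ∈ W := fun m => normz_mem (resV_mem h1 k (u m).2)
  obtain ⟨gk, hgkW, hgk⟩ :=
    ccp_glue hW (fun m => S (u m)) (fun m => suppSet_measurable _) v hvW
  set g' : ℕ → Fin n → Ω →ₘ[P] ℂ := fun i => if i = k then gk else g i with hg'def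
  have hg'lt : ∀ i, i < k → g' i = g i := fun i hi => if_neg (by omega)
  have hg'k : g' k = gk := if_pos rfl
  have hres_eq : ∀ w, resV g' k w = resV g k w := by
    intro w
    rw [resV, resV]
    congr 1
    exact Finset.sum_congr rfl fun i hi => by
      rw [hg'lt i (Finset.mem_range.1 hi)]
  have hresorth : ∀ᵐ ω ∂P, ∀ m : ℕ, ∀ i, i < k →
      ∑ a, resV g k (u m).1 a ω * (starRingEnd ℂ) (g i a ω) = 0 := by
    rw [ae_all_iff]
    intro m
    rw [ae_all_iff]
    intro i
    by_cases hik : i < k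
    · filter_upwards [res_orth h2 h3 (u m).1 hik] with ω h _
      exact h
    · filter_upwards with ω hik'
      exact absurd hik' hik
  have hnormz : ∀ᵐ ω ∂P, ∀ m : ℕ, ∀ a, v m a ω =
      (((Real.sqrt (∑ b, Complex.normSq (resV g k (u m).1 b ω)))⁻¹ : ℝ) : ℂ) *
        resV g k (u m).1 a ω :=
    ae_all_iff.2 fun m => normz_ae _
  have h5ae : ∀ᵐ ω ∂P, ∀ m : ℕ, (∃ a, resV g k (u m).1 a ω ≠ 0) →
      ∀ i, i < k → ∃ a, g i a ω ≠ 0 :=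
    ae_all_iff.2 fun m => h5 (u m).1 (u m).2
  have hkey : ∀ᵐ ω ∂P, ((∀ a, gk a ω = 0) ∧ ω ∉ ⋃ m, S (u m)) ∨
      ((∃ a, gk a ω ≠ 0) ∧ (∑ a, Complex.normSq (gk a ω)) = 1 ∧
       (∀ i, i < k → ∑ a, gk a ω * (starRingEnd ℂ) (g i a ω) = 0) ∧
       (∀ i, i < k → ∃ a, g i a ω ≠ 0)) := by
    filter_upwards [hgk, hresorth, hnormz, h5ae] with ω hglue horth hnz h5p
    by_cases hU : ω ∈ ⋃ m, S (u m)
    · right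
      have hex : ∃ m, ω ∈ S (u m) := Set.mem_iUnion.1 hU
      set m := Nat.find hex with hmdef
      have hmem : ω ∈ S (u m) := Nat.find_spec hex
      have hD : ω ∈ S (u m) \ ⋃ l, ⋃ (_ : l < m), S (u l) := by
        refine ⟨hmem, fun hc => ?_⟩
        obtain ⟨l, hl⟩ := Set.mem_iUnion.1 hc
        obtain ⟨hll, hlS⟩ := Set.mem_iUnion.1 hl
        exact Nat.find_min hex hll hlS
      have hval : ∀ j, gk j ω = v m j ω := hglue.2 m hD
      obtain ⟨a0, ha0⟩ := hmem
      have hqpos : 0 < ∑ b, Complex.normSq (resV g k (u m).1 b ω) :=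
        Finset.sum_pos' (fun b _ => Complex.normSq_nonneg _)
          ⟨a0, Finset.mem_univ _, Complex.normSq_pos.2 ha0⟩
      have hsq : 0 < Real.sqrt (∑ b, Complex.normSq (resV g k (u m).1 b ω)) :=
        Real.sqrt_pos.2 hqpos
      have hcoef : (((Real.sqrt (∑ b, Complex.normSq (resV g k (u m).1 b ω)))⁻¹ :
          ℝ) : ℂ) ≠ 0 := by
        simp only [ne_eq, Complex.ofReal_eq_zero, inv_eq_zero]
        exact hsq.ne'
      have hform : ∀ j, gk j ω =
          (((Real.sqrt (∑ b, Complex.normSq (resV g k (u m).1 b ω)))⁻¹ : ℝ) : ℂ) *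
            resV g k (u m).1 j ω := fun j => by rw [hval j, hnz m j]
      refine ⟨⟨a0, ?_⟩, ?_, ?_, h5p m ⟨a0, ha0⟩⟩
      · rw [hform a0]
        exact mul_ne_zero hcoef ha0
      · have : ∀ a, Complex.normSq (gk a ω) =
            ((Real.sqrt (∑ b, Complex.normSq (resV g k (u m).1 b ω)))⁻¹) ^ 2 *
              Complex.normSq (resV g k (u m).1 a ω) := by
          intro a
          rw [hform a, Complex.normSq_mul, Complex.normSq_ofReal]
          ring
        rw [Finset.sum_congr rfl fun a _ => this a, ← Finset.mul_sum]
        rw [inv_pow, Real.sq_sqrt hqpos.le]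
        exact inv_mul_cancel₀ hqpos.ne'
      · intro i hik
        have : ∑ a, gk a ω * (starRingEnd ℂ) (g i a ω) =
            (((Real.sqrt (∑ b, Complex.normSq (resV g k (u m).1 b ω)))⁻¹ : ℝ) : ℂ) *
              ∑ a, resV g k (u m).1 a ω * (starRingEnd ℂ) (g i a ω) := by
          rw [Finset.mul_sum]
          exact Finset.sum_congr rfl fun a _ => by rw [hform a, mul_assoc]
        rw [this, horth m i hik, mul_zero]
    · left
      exact ⟨hglue.1 hU, hU⟩
  refine ⟨g', hg'lt, ?_, ?_, ?_, ?_, ?_⟩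
  · intro i
    by_cases hik : i = k
    · rw [hg'def]
      simpa [hik] using hgkW
    · rw [hg'def]
      simpa [hik] using h1 i
  · intro i hi j hj hij
    by_cases hikk : i = k
    · have hjk : j < k := by omega
      rw [hikk, hg'k, hg'lt j hjk]
      filter_upwards [hkey] with ω hk
      rcases hk with ⟨hz, _⟩ | hr
      · exact Finset.sum_eq_zero fun a _ => by rw [hz a, zero_mul]
      · exact hr.2.2.1 j hjk
    · by_cases hjkk : j = k
      · have hik : i < k := by omega
        rw [hjkk, hg'k, hg'lt i hik]
        filter_upwards [hkey] with ω hk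
        rcases hk with ⟨hz, _⟩ | hr
        · exact Finset.sum_eq_zero fun a _ => by rw [hz a, map_zero, mul_zero]
        · have hco : (starRingEnd ℂ) (∑ a, gk a ω * (starRingEnd ℂ) (g i a ω)) =
              ∑ a, g i a ω * (starRingEnd ℂ) (gk a ω) := by
            rw [map_sum]
            exact Finset.sum_congr rfl fun a _ => by
              rw [map_mul, Complex.conj_conj]
              ring
          rw [← hco, hr.2.2.1 i hik, map_zero]
      · have hik : i < k := by omega
        have hjk : j < k := by omega
        rw [hg'lt i hik, hg'lt j hjk]
        exact h2 i hik j hjk hij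
  · intro i hi
    by_cases hikk : i = k
    · rw [hikk, hg'k]
      filter_upwards [hkey] with ω hk
      rcases hk with ⟨hz, _⟩ | hr
      · exact Or.inl (Finset.sum_eq_zero fun a _ => by rw [hz a, Complex.normSq_zero])
      · exact Or.inr hr.2.1
    · have hik : i < k := by omega
      rw [hg'lt i hik]
      exact h3 i hik
  · intro i j hij hjk1
    by_cases hjkk : j = k
    · rw [hjkk, hg'k]
      by_cases hikk : i = k
      · rw [hikk, hg'k]
        filter_upwards with ω h
        exact h
      · have hik : i < k := by omega
        rw [hg'lt i hik]
        filter_upwards [hkey] with ω hk hgknz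
        rcases hk with ⟨hz, _⟩ | hr
        · obtain ⟨a, ha⟩ := hgknz
          exact absurd (hz a) ha
        · exact hr.2.2.2 i hik
    · have hjk : j < k := by omega
      have hik : i < k := by omega
      rw [hg'lt i hik, hg'lt j hjk]
      exact h4 i j hij hjk
  · intro w hw
    have hsplit : resV g' (k + 1) w = resV g k w - dotR w gk • gk := by
      rw [resV, Finset.sum_range_succ, ← sub_sub, ← hres_eq w, hg'k, resV]
    have hφ : ∀ᵐ ω ∂P, ∀ a, resV g' (k + 1) w a ω =
        resV g k w a ω - dotR w gk ω * gk a ω := by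
      rw [ae_all_iff]
      intro a
      have e1 : resV g' (k + 1) w a = resV g k w a - dotR w gk * gk a := by
        rw [hsplit]
        rfl
      filter_upwards [sub_ae (resV g k w a) (dotR w gk * gk a),
        mul_ae (dotR w gk) (gk a)] with ω hsub hmul
      rw [e1, hsub, hmul]
    have hinU : ∀ᵐ ω ∂P, (∃ a, resV g k w a ω ≠ 0) → ω ∈ ⋃ m, S (u m) := by
      have h0 := hu ⟨w, hw⟩
      have h0' := (MeasureTheory.measure_eq_zero_iff_ae_notMem (μ := P)).1 h0
      filter_upwards [h0'] with ω hω hres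
      by_contra hU
      exact hω ⟨hres, hU⟩
    have hUval : ∀ᵐ ω ∂P, ∀ m : ℕ, ω ∈ S (u m) \ ⋃ l, ⋃ (_ : l < m), S (u l) →
        ∀ j, gk j ω = v m j ω := by
      filter_upwards [hgk] with ω hglue
      exact hglue.2
    filter_upwards [hφ, hinU, hkey] with ω hφω hinUω hk
    intro hres i hik1
    rcases hk with ⟨hz, hnU⟩ | hr
    · exfalso
      obtain ⟨a, ha⟩ := hres
      rw [hφω a, hz a, mul_zero, sub_zero] at ha
      exact hnU (hinUω ⟨a, ha⟩)
    · by_cases hikk : i = k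
      · rw [hikk, hg'k]
        exact hr.1
      · have hik : i < k := by omega
        rw [hg'lt i hik]
        exact hr.2.2.2 i hik

lemma exists_inv [IsProbabilityMeasure P] {n : ℕ}
    (W : Submodule (Ω →ₘ[P] ℂ) (Fin n → Ω →ₘ[P] ℂ))
    (hW : SetCCP (P := P) (W : Set (Fin n → Ω →ₘ[P] ℂ))) (k : ℕ) :
    ∃ g, Inv W k g := by
  induction k with
  | zero =>
    refine ⟨fun _ => 0, fun _ => W.zero_mem, ?_, ?_, ?_, ?_⟩
    · intro i hi
      exact absurd hi (Nat.not_lt_zero i)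
    · intro i hi
      exact absurd hi (Nat.not_lt_zero i)
    · intro i j _ hj
      exact absurd hj (Nat.not_lt_zero j)
    · intro w _
      filter_upwards with ω _ i hi
      exact absurd hi (Nat.not_lt_zero i)
  | succ k ih =>
    obtain ⟨g, hg⟩ := ih
    obtain ⟨g', _, hg'⟩ := inv_step hW hg
    exact ⟨g', hg'⟩

lemma part1 [IsProbabilityMeasure P] {n : ℕ}
    (W : Submodule (Ω →ₘ[P] ℂ) (Fin n → Ω →ₘ[P] ℂ))
    (hW : SetCCP (P := P) (W : Set (Fin n → Ω →ₘ[P] ℂ))) (hWt : W ≠ ⊤) :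
    ∃ z : Fin n → Ω →ₘ[P] ℂ, z ≠ 0 ∧ ∀ w ∈ W, ∑ i, w i * conjC (z i) = 0 := by
  classical
  obtain ⟨g, h1, h2, h3, h4, h5⟩ := exists_inv W hW (n + 1)
  -- master a.e. orthogonality facts
  have hA : ∀ᵐ ω ∂P, ∀ i j : ℕ, i < n + 1 → j < n + 1 → i ≠ j →
      ∑ a, g i a ω * (starRingEnd ℂ) (g j a ω) = 0 := by
    rw [ae_all_iff]
    intro i
    rw [ae_all_iff]
    intro j
    by_cases h : i < n + 1 ∧ j < n + 1 ∧ i ≠ j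
    · filter_upwards [h2 i h.1 j h.2.1 h.2.2] with ω hω _ _ _
      exact hω
    · filter_upwards with ω hi hj hij
      exact absurd ⟨hi, hj, hij⟩ h
  have hC : ∀ᵐ ω ∂P, ∀ i : ℕ, i ≤ n →
      ((∃ a, g n a ω ≠ 0) → ∃ a, g i a ω ≠ 0) := by
    rw [ae_all_iff]
    intro i
    by_cases h : i ≤ n
    · filter_upwards [h4 i n h (by omega)] with ω hω _
      exact hω
    · filter_upwards with ω hle
      exact absurd hle h
  -- the `n`-th vector vanishes a.e. (dimension count)
  have hgn : ∀ᵐ ω ∂P, ∀ a, g n a ω = 0 := by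
    filter_upwards [hA, hC] with ω hAω hCω
    by_contra hbad
    push_neg at hbad
    obtain ⟨a0, ha0⟩ := hbad
    have hnz : ∀ i : Fin (n + 1), ∃ a, g (i : ℕ) a ω ≠ 0 := fun i =>
      hCω i (by omega) ⟨a0, ha0⟩
    have hQ : ∀ i : Fin (n + 1),
        (∑ a, g (i : ℕ) a ω * (starRingEnd ℂ) (g (i : ℕ) a ω)) ≠ 0 := by
      intro i
      obtain ⟨a, ha⟩ := hnz i
      have hpos : (0 : ℝ) < ∑ a, Complex.normSq (g (i : ℕ) a ω) :=
        Finset.sum_pos' (fun b _ => Complex.normSq_nonneg _)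
          ⟨a, Finset.mem_univ _, Complex.normSq_pos.2 ha⟩
      have hcast : (∑ a, g (i : ℕ) a ω * (starRingEnd ℂ) (g (i : ℕ) a ω)) =
          ((∑ a, Complex.normSq (g (i : ℕ) a ω) : ℝ) : ℂ) := by
        push_cast
        exact Finset.sum_congr rfl fun a _ => Complex.mul_conj _
      rw [hcast]
      exact_mod_cast hpos.ne'
    have hLI : LinearIndependent ℂ (fun i : Fin (n + 1) => fun a : Fin n =>
        g (i : ℕ) a ω) := by
      rw [Fintype.linearIndependent_iff]
      intro c hc l
      have h0 : ∑ a, (∑ i : Fin (n + 1), c i * g (i : ℕ) a ω) *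
          (starRingEnd ℂ) (g (l : ℕ) a ω) = 0 := by
        have : ∀ a : Fin n, (∑ i : Fin (n + 1), c i * g (i : ℕ) a ω) = 0 := by
          intro a
          have := congrFun hc a
          simpa [Finset.sum_apply] using this
        exact Finset.sum_eq_zero fun a _ => by rw [this a, zero_mul]
      have hswap : ∑ a, (∑ i : Fin (n + 1), c i * g (i : ℕ) a ω) *
          (starRingEnd ℂ) (g (l : ℕ) a ω) =
          ∑ i : Fin (n + 1), c i * ∑ a, g (i : ℕ) a ω *
            (starRingEnd ℂ) (g (l : ℕ) a ω) := by
        rw [show (∑ a, (∑ i : Fin (n + 1), c i * g (i : ℕ) a ω) *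
            (starRingEnd ℂ) (g (l : ℕ) a ω)) =
            ∑ a, ∑ i : Fin (n + 1), c i * g (i : ℕ) a ω *
              (starRingEnd ℂ) (g (l : ℕ) a ω) from
          Finset.sum_congr rfl fun a _ => Finset.sum_mul _ _ _]
        rw [Finset.sum_comm]
        refine Finset.sum_congr rfl fun i _ => ?_
        rw [Finset.mul_sum]
        exact Finset.sum_congr rfl fun a _ => mul_assoc _ _ _
      have hsingle : ∑ i : Fin (n + 1), c i * ∑ a, g (i : ℕ) a ω *
          (starRingEnd ℂ) (g (l : ℕ) a ω) =
          c l * ∑ a, g (l : ℕ) a ω * (starRingEnd ℂ) (g (l : ℕ) a ω) := by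
        refine Finset.sum_eq_single_of_mem l (Finset.mem_univ l) fun i _ hil => ?_
        rw [hAω i l (by omega) (by omega) (by
          intro h
          exact hil (Fin.ext h)), mul_zero]
      rw [hswap, hsingle] at h0
      exact (mul_eq_zero.1 h0).resolve_right (hQ l)
    have hcard := hLI.fintype_card_le_finrank
    rw [Module.finrank_pi, Fintype.card_fin, Fintype.card_fin] at hcard
    omega
  -- residuals vanish
  have hresz : ∀ w, w ∈ W → resV g (n + 1) w = 0 := by
    intro w hw
    funext a
    show resV g (n + 1) w a = (0 : Ω →ₘ[P] ℂ)
    apply AEEqFun.ext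
    filter_upwards [h5 w hw, hgn, zero_ae (P := P) ℂ] with ω hres hz z0
    rw [z0]
    by_contra hne
    obtain ⟨b, hb⟩ := hres ⟨a, hne⟩ n (by omega)
    exact hb (hz b)
  have hspan : ∀ w, w ∈ W → w = ∑ i ∈ Finset.range (n + 1), dotR w (g i) • g i :=
    fun w hw => sub_eq_zero.1 (hresz w hw)
  -- standard basis vectors
  set e : Fin n → Fin n → Ω →ₘ[P] ℂ :=
    fun j a => if a = j then 1 else 0 with hedef
  have hjex : ∃ j : Fin n, resV g (n + 1) (e j) ≠ 0 := by
    by_contra hno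
    push_neg at hno
    apply hWt
    rw [eq_top_iff]
    intro v _
    have hey : ∀ j, e j ∈ W := by
      intro j
      have he : e j = ∑ i ∈ Finset.range (n + 1), dotR (e j) (g i) • g i :=
        sub_eq_zero.1 (hno j)
      rw [he]
      exact Submodule.sum_mem _ fun i _ => Submodule.smul_mem _ _ (h1 i)
    have hv : v = ∑ j, v j • e j := by
      funext a
      rw [Finset.sum_apply]
      have hterm : ∀ j, (v j • e j) a = v j * e j a := fun j => rfl
      rw [Finset.sum_congr rfl fun j _ => hterm j]
      simp [hedef]
    rw [hv]
    exact Submodule.sum_mem _ fun j _ => Submodule.smul_mem _ _ (hey j)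
  obtain ⟨j, hjne⟩ := hjex
  refine ⟨resV g (n + 1) (e j), hjne, ?_⟩
  intro w hw
  show dotR w (resV g (n + 1) (e j)) = 0
  apply AEEqFun.ext
  have he_ae : ∀ᵐ ω ∂P, ∀ (j' : Fin n) (a : Fin n),
      e j' a ω = if a = j' then 1 else 0 := by
    rw [ae_all_iff]
    intro j'
    rw [ae_all_iff]
    intro a
    by_cases h : a = j'
    · have : e j' a = (1 : Ω →ₘ[P] ℂ) := by rw [hedef]; simp [h]
      rw [this, if_pos h]
      exact one_ae (P := P) ℂ
    · have : e j' a = (0 : Ω →ₘ[P] ℂ) := by rw [hedef]; simp [h]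
      rw [this, if_neg h]
      exact zero_ae (P := P) ℂ
  have hres0 : ∀ᵐ ω ∂P, ∀ a, resV g (n + 1) w a ω = 0 := by
    rw [ae_all_iff]
    intro a
    have : resV g (n + 1) w a = (0 : Ω →ₘ[P] ℂ) := by rw [hresz w hw]; rfl
    rw [this]
    exact zero_ae (P := P) ℂ
  filter_upwards [dotR_ae w (resV g (n + 1) (e j)), resV_ae g (n + 1) (e j),
    resV_ae g (n + 1) w, hres0, he_ae, zero_ae (P := P) ℂ]
    with ω hdot hzval hwres hw0 hev h0
  rw [hdot, h0]
  -- pointwise span representation of w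
  have hwpt : ∀ a, w a ω = ∑ i ∈ Finset.range (n + 1),
      (∑ b, w b ω * (starRingEnd ℂ) (g i b ω)) * g i a ω := by
    intro a
    have h := hwres a
    rw [hw0 a] at h
    exact sub_eq_zero.1 h.symm
  have hD : ∀ i, (∑ b, e j b ω * (starRingEnd ℂ) (g i b ω)) =
      (starRingEnd ℂ) (g i j ω) := by
    intro i
    have hterm : ∀ b : Fin n, e j b ω * (starRingEnd ℂ) (g i b ω) =
        (if b = j then (starRingEnd ℂ) (g i j ω) else 0) := by
      intro b
      rw [hev j b]
      by_cases h : b = j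
      · simp [h]
      · simp [h]
    rw [Finset.sum_congr rfl fun b _ => hterm b]
    simp
  have hzv : ∀ a, (starRingEnd ℂ) (resV g (n + 1) (e j) a ω) =
      (if a = j then 1 else 0) -
        ∑ i ∈ Finset.range (n + 1), g i j ω * (starRingEnd ℂ) (g i a ω) := by
    intro a
    rw [hzval a, map_sub, map_sum]
    congr 1
    · rw [hev j a]
      by_cases h : a = j
      · simp [h]
      · simp [h]
    · refine Finset.sum_congr rfl fun i _ => ?_
      rw [map_mul, hD i, Complex.conj_conj]
  rw [Finset.sum_congr rfl fun a (_ : a ∈ Finset.univ) => by rw [hzv a]]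
  rw [Finset.sum_congr rfl fun a (_ : a ∈ Finset.univ) =>
    mul_sub (w a ω) _ _]
  rw [Finset.sum_sub_distrib]
  have hfirst : ∑ a, w a ω * (if a = j then 1 else 0) = w j ω := by
    simp
  have hsecond : ∑ a, w a ω * ∑ i ∈ Finset.range (n + 1),
      g i j ω * (starRingEnd ℂ) (g i a ω) =
      ∑ i ∈ Finset.range (n + 1), g i j ω *
        ∑ a, w a ω * (starRingEnd ℂ) (g i a ω) := by
    rw [Finset.sum_congr rfl fun a (_ : a ∈ Finset.univ) =>
      (Finset.mul_sum _ _ _ :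
        w a ω * ∑ i ∈ Finset.range (n + 1),
          g i j ω * (starRingEnd ℂ) (g i a ω) = _)]
    rw [Finset.sum_comm]
    refine Finset.sum_congr rfl fun i _ => ?_
    rw [Finset.mul_sum]
    exact Finset.sum_congr rfl fun a _ => by ring
  rw [hfirst, hsecond, hwpt j, sub_eq_zero]
  exact Finset.sum_congr rfl fun i _ => mul_comm _ _

end OrthoProof


open MeasureTheory RNM in
/-- A proper `L⁰(𝓕,ℂ)`-submodule of `L⁰(𝓕,ℂⁿ)` with the countable concatenation property
admits a nonzero orthogonal element; consequently, for `L⁰(𝓕,ℂ)`-independent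
`f₁,…,fₙ ∈ E*` on an `RN` module `E` with the countable concatenation property, the map
`T x = (f₁(x),…,fₙ(x))` is surjective onto `L⁰(𝓕,ℂⁿ)`. -/
theorem orthogonal_complement_and_surjectivity {Ω : Type} [MeasurableSpace Ω]
    {P : Measure Ω} [IsProbabilityMeasure P] (n : ℕ) (hn : 0 < n) {E : Type*}
    [AddCommGroup E] [Module (Ω →ₘ[P] ℂ) E] (nrm : E → Ω →ₘ[P] ℝ)
    (hnrm : IsRNNorm nrm) (hccp : HasCCP P E)
    (f : Fin n → (E →ₗ[Ω →ₘ[P] ℂ] (Ω →ₘ[P] ℂ))) (hf : ∀ i, f i ∈ rdual nrm)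
    (hind : ∀ lam : Fin n → Ω →ₘ[P] ℂ, ∑ k, lam k • f k = 0 → lam = 0) :
    (∀ W : Submodule (Ω →ₘ[P] ℂ) (Fin n → Ω →ₘ[P] ℂ),
      SetCCP (P := P) (W : Set (Fin n → Ω →ₘ[P] ℂ)) → W ≠ ⊤ →
      ∃ z : Fin n → Ω →ₘ[P] ℂ, z ≠ 0 ∧ ∀ w ∈ W, ∑ i, w i * conjC (z i) = 0) ∧
    Function.Surjective (fun (x : E) (i : Fin n) => f i x) := by
  classical
  constructor
  · intro W hWccp hWt
    exact OrthoProof.part1 W hWccp hWt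
  · set T : E →ₗ[Ω →ₘ[P] ℂ] (Fin n → Ω →ₘ[P] ℂ) :=
      { toFun := fun x i => f i x
        map_add' := fun x y => by
          funext i
          simp
        map_smul' := fun c x => by
          funext i
          simp } with hTdef
    have hccpT : SetCCP (P := P)
        ((LinearMap.range T : Submodule (Ω →ₘ[P] ℂ) (Fin n → Ω →ₘ[P] ℂ)) :
          Set (Fin n → Ω →ₘ[P] ℂ)) := by
      intro A hA x hx
      have hx' : ∀ m, ∃ y, T y = x m := fun m => LinearMap.mem_range.1 (hx m)
      choose y hy using hx'
      obtain ⟨y0, hy0⟩ := hccp A hA y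
      refine ⟨T y0, LinearMap.mem_range_self T y0, fun m => ?_⟩
      rw [← LinearMap.map_smul, hy0 m, LinearMap.map_smul, hy m]
    by_cases hT2 : LinearMap.range T = ⊤
    · intro v
      have hv : v ∈ LinearMap.range T := hT2 ▸ Submodule.mem_top
      obtain ⟨x, hx⟩ := hv
      exact ⟨x, hx⟩
    · exfalso
      obtain ⟨z, hzne, hzorth⟩ := OrthoProof.part1 _ hccpT hT2
      have hlam : (fun i : Fin n => conjC (z i)) = 0 := by
        apply hind
        apply LinearMap.ext
        intro x
        have hx := hzorth (T x) (LinearMap.mem_range_self T x)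
        have hc : (∑ k, conjC (z k) • f k) x = ∑ k, conjC (z k) * f k x := by
          rw [LinearMap.sum_apply]
          exact Finset.sum_congr rfl fun k _ => rfl
        have hc2 : (∑ k, conjC (z k) * f k x) = ∑ k, T x k * conjC (z k) :=
          Finset.sum_congr rfl fun k _ => mul_comm _ _
        rw [hc, hc2, hx]
        rfl
      have hz0 : z = 0 := by
        funext i
        have hci : conjC (z i) = 0 := congrFun hlam i
        show z i = (0 : Ω →ₘ[P] ℂ)
        apply AEEqFun.ext
        filter_upwards [OrthoProof.conjC_ae (z i), zero_ae (P := P) ℂ]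
          with ω hcω hz'
        have hval : conjC (z i) ω = (0 : Ω →ₘ[P] ℂ) ω := by rw [hci]
        rw [hcω, hz'] at hval
        have := congrArg (starRingEnd ℂ) hval
        rw [Complex.conj_conj, map_zero] at this
        rw [hz']
        exact this
      exact hzne hz0
end
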